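/- arXiv:2012.04679 — 3 statements merged into one kernel-verified Lean document; each statement's English description precedes it below -/
import Mathlib

section
/- Let m ≥ 3 and let T_{utriv,m} := e_1⊗e_1⊗e_1 + ∑_{ρ=2}^m ( e_1⊗e_ρ⊗e_ρ + e_ρ⊗e_1⊗e_ρ ) ∈ ℂ^m ⊗ ℂ^m ⊗ ℂ^m. Then the border rank of T_{utriv,m} equals m and the tensor rank of T_{utriv,m} equals 2m − 1. -/
open scoped BigOperators

noncomputable section

/-- The ideal of all polynomials vanishing on a subset `S` of affine space `σ → ℂ`. -/
def vanishingIdeal' {σ : Type} (S : Set (σ → ℂ)) : Ideal (MvPolynomial σ ℂ) where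
  carrier := {p | ∀ x ∈ S, MvPolynomial.eval x p = 0}
  add_mem' := by
    intro p q hp hq x hx
    simp [hp x hx, hq x hx]
  zero_mem' := by
    intro x hx
    simp
  smul_mem' := by
    intro c p hp x hx
    simp [smul_eq_mul, hp x hx]

/-- The dimension of an affine algebraic set `S ⊆ ℂ^σ`: the Krull dimension of its
coordinate ring.  The empty set has dimension `⊥` (i.e. `-∞`). -/
def affineDim {σ : Type} (S : Set (σ → ℂ)) : WithBot (WithTop ℕ) :=
  ringKrullDim (MvPolynomial σ ℂ ⧸ vanishingIdeal' S)

/-- The dimension of an affine algebraic set, as a natural number. -/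
def affineDimNat {σ : Type} (S : Set (σ → ℂ)) : ℕ :=
  ENat.toNat ((affineDim S).unbotD 0)

variable {ι₁ ι₂ ι₃ : Type} [Fintype ι₁] [Fintype ι₂] [Fintype ι₃]

/-- The affine algebraic set `Σ̂^{AB}_T ⊆ ℂ^{ι₁} × ℂ^{ι₂}`. -/
def hatSigmaAB (T : ι₁ → ι₂ → ι₃ → ℂ) : Set (ι₁ ⊕ ι₂ → ℂ) :=
  {x | ∀ k : ι₃, ∑ i : ι₁, ∑ j : ι₂, T i j k * x (Sum.inl i) * x (Sum.inr j) = 0}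

/-- The geometric rank `GR(T) = (a+b) - dim Σ̂^{AB}_T`. -/
def geomRank (T : ι₁ → ι₂ → ι₃ → ℂ) : ℕ :=
  (Fintype.card ι₁ + Fintype.card ι₂) - affineDimNat (hatSigmaAB T)

/-- The flattening `T(α)`, a `ι₂ × ι₃` matrix, for `α ∈ ℂ^{ι₁}`. -/
def sliceA (T : ι₁ → ι₂ → ι₃ → ℂ) (α : ι₁ → ℂ) : Matrix ι₂ ι₃ ℂ :=
  Matrix.of fun j k => ∑ i : ι₁, T i j k * α i

/-- The flattening `T(β)`, a `ι₁ × ι₃` matrix, for `β ∈ ℂ^{ι₂}`. -/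
def sliceB (T : ι₁ → ι₂ → ι₃ → ℂ) (β : ι₂ → ℂ) : Matrix ι₁ ι₃ ℂ :=
  Matrix.of fun i k => ∑ j : ι₂, T i j k * β j

/-- The flattening `T(γ)`, a `ι₁ × ι₂` matrix, for `γ ∈ ℂ^{ι₃}`. -/
def sliceC (T : ι₁ → ι₂ → ι₃ → ℂ) (γ : ι₃ → ℂ) : Matrix ι₁ ι₂ ℂ :=
  Matrix.of fun i j => ∑ k : ι₃, T i j k * γ k

/-- A tensor is concise if its three flattening maps are injective. -/
def Concise (T : ι₁ → ι₂ → ι₃ → ℂ) : Prop :=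
  Function.Injective (sliceA T) ∧ Function.Injective (sliceB T) ∧
    Function.Injective (sliceC T)

/-- The tensor rank: least `r` such that `T` is a sum of `r` rank-one tensors. -/
def tensorRank (T : ι₁ → ι₂ → ι₃ → ℂ) : ℕ :=
  sInf {r : ℕ | ∃ (u : Fin r → ι₁ → ℂ) (v : Fin r → ι₂ → ℂ) (w : Fin r → ι₃ → ℂ),
    T = fun i j k => ∑ s : Fin r, u s i * v s j * w s k}

/-- The border rank: least `r` such that `T` is a limit of tensors of rank at most `r`. -/
def borderRank (T : ι₁ → ι₂ → ι₃ → ℂ) : ℕ :=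
  sInf {r : ℕ | T ∈ closure {T' : ι₁ → ι₂ → ι₃ → ℂ |
    ∃ (u : Fin r → ι₁ → ℂ) (v : Fin r → ι₂ → ℂ) (w : Fin r → ι₃ → ℂ),
      T' = fun i j k => ∑ s : Fin r, u s i * v s j * w s k}}

/-- The elementary (rank-one) basis tensor `e_i ⊗ e_j ⊗ e_k`. -/
def E {a b c : ℕ} (i : Fin a) (j : Fin b) (k : Fin c) : Fin a → Fin b → Fin c → ℂ :=
  fun i' j' k' => if i' = i ∧ j' = j ∧ k' = k then 1 else 0

/-- The Kronecker product of two 3-tensors. -/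
def kron {κ₁ κ₂ κ₃ : Type} [Fintype κ₁] [Fintype κ₂] [Fintype κ₃]
    (T : ι₁ → ι₂ → ι₃ → ℂ) (T' : κ₁ → κ₂ → κ₃ → ℂ) :
    ι₁ × κ₁ → ι₂ × κ₂ → ι₃ × κ₃ → ℂ :=
  fun i j k => T i.1 j.1 k.1 * T' i.2 j.2 k.2

/-- The tensor obtained from `T` by permuting the three factors by `σ`. -/
def permuteTensor {m : ℕ} (σ : Equiv.Perm (Fin 3)) (T : Fin m → Fin m → Fin m → ℂ) :
    Fin m → Fin m → Fin m → ℂ :=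
  fun i j k => T (![i, j, k] (σ 0)) (![i, j, k] (σ 1)) (![i, j, k] (σ 2))

/-- The action of a triple of linear maps on a tensor. -/
def actTensor {m : ℕ} (g₁ g₂ g₃ : Matrix (Fin m) (Fin m) ℂ)
    (T : Fin m → Fin m → Fin m → ℂ) : Fin m → Fin m → Fin m → ℂ :=
  fun i j k => ∑ i' : Fin m, ∑ j' : Fin m, ∑ k' : Fin m,
    g₁ i i' * g₂ j j' * g₃ k k' * T i' j' k'

/-- Two tensors are equivalent if one is obtained from the other by invertible linear
maps on each factor together with a permutation of the three factors. -/
def equivTensor {m : ℕ} (T T' : Fin m → Fin m → Fin m → ℂ) : Prop :=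
  ∃ (σ : Equiv.Perm (Fin 3)) (g₁ g₂ g₃ : Matrix (Fin m) (Fin m) ℂ),
    IsUnit g₁ ∧ IsUnit g₂ ∧ IsUnit g₃ ∧
    T' = actTensor g₁ g₂ g₃ (permuteTensor σ T)

/-- `T` is `1_*`-generic: some flattening space contains a matrix of full rank. -/
def OneStarGeneric {m : ℕ} (T : Fin m → Fin m → Fin m → ℂ) : Prop :=
  (∃ α, IsUnit (sliceA T α)) ∨ (∃ β, IsUnit (sliceB T β)) ∨ (∃ γ, IsUnit (sliceC T γ))

end

noncomputable section Stmt4Aux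
variable {m : ℕ} (hm : 3 ≤ m)

lemma stmt4_det_zero_of_sum_outer {n : ℕ} {ι : Type*} [Fintype ι] (F : Finset ι)
    (x y : ι → Fin n → ℂ) (hF : F.card < n) :
    (Matrix.of fun j k : Fin n => ∑ s ∈ F, x s j * y s k).det = 0 := by
  classical
  let φ : (Fin n → ℂ) →ₗ[ℂ] (F → ℂ) :=
    { toFun := fun z s => ∑ k, y s.1 k * z k
      map_add' := by
        intro a b; funext s; simp [mul_add, Finset.sum_add_distrib]
      map_smul' := by
        intro c a; funext s
        simp only [Pi.smul_apply, smul_eq_mul, RingHom.id_apply, Finset.mul_sum]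
        exact Finset.sum_congr rfl fun k _ => by ring }
  have hninj : ¬ Function.Injective φ := by
    intro h
    have h1 := LinearMap.finrank_le_finrank_of_injective h
    rw [Module.finrank_pi, Module.finrank_pi] at h1
    simp only [Fintype.card_fin, Fintype.card_coe] at h1
    omega
  obtain ⟨a, b, hab, hne⟩ := Function.not_injective_iff.mp hninj
  have hz0 : a - b ≠ 0 := sub_ne_zero.mpr hne
  have hφz : φ (a - b) = 0 := by rw [map_sub, hab, sub_self]
  have key : ∀ s (hs : s ∈ F), ∑ k, y s k * (a - b) k = 0 := fun s hs =>
    congrFun hφz ⟨s, hs⟩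
  rw [← Matrix.exists_mulVec_eq_zero_iff]
  refine ⟨a - b, hz0, ?_⟩
  funext j
  simp only [Matrix.mulVec, dotProduct, Matrix.of_apply, Pi.zero_apply]
  calc ∑ k, (∑ s ∈ F, x s j * y s k) * (a - b) k
      = ∑ s ∈ F, x s j * ∑ k, y s k * (a - b) k := by
        simp_rw [Finset.sum_mul, Finset.mul_sum]
        rw [Finset.sum_comm]
        exact Finset.sum_congr rfl fun s _ => Finset.sum_congr rfl fun k _ => by ring
    _ = 0 := Finset.sum_eq_zero fun s hs => by rw [key s hs, mul_zero]

lemma stmt4_dual_rep {n : ℕ} (f : (Fin n → ℂ) →ₗ[ℂ] ℂ) (y : Fin n → ℂ) :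
    f y = ∑ ρ, y ρ * f (fun ρ' => if ρ = ρ' then 1 else 0) := by
  conv_lhs => rw [pi_eq_sum_univ y]
  rw [map_sum]
  exact Finset.sum_congr rfl fun ρ _ => by rw [map_smul, smul_eq_mul]

def stmt4z : Fin m := ⟨0 * 1, by omega⟩

def stmt4sc (ρ : Fin (m - 1)) : Fin m := ⟨(ρ : ℕ) + 1 * 1, by have := ρ.isLt; omega⟩

lemma stmt4sc_ne (ρ : Fin (m - 1)) : stmt4sc hm ρ ≠ stmt4z hm := by
  simp [stmt4sc, stmt4z, Fin.ext_iff]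

lemma stmt4sc_inj : Function.Injective (stmt4sc hm) := by
  intro a b h
  simpa [stmt4sc, Fin.ext_iff] using h

lemma stmt4_cases (k : Fin m) : k = stmt4z hm ∨ ∃ ρ : Fin (m - 1), k = stmt4sc hm ρ := by
  rcases k with ⟨v, hv⟩
  rcases v with _ | v'
  · left; rfl
  · right; exact ⟨⟨v', by omega⟩, rfl⟩

lemma stmt4_sum_zero {α : Type*} [AddCommMonoid α] (c : Fin (m - 1) → α) :
    (∑ ρ : Fin (m - 1), if stmt4z hm = stmt4sc hm ρ then c ρ else 0) = 0 :=
  Finset.sum_eq_zero fun ρ _ => by rw [if_neg (Ne.symm (stmt4sc_ne hm ρ))]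

lemma stmt4_sum_single {α : Type*} [AddCommMonoid α] (c : Fin (m - 1) → α) (κ : Fin (m - 1)) :
    (∑ ρ : Fin (m - 1), if stmt4sc hm κ = stmt4sc hm ρ then c ρ else 0) = c κ := by
  simp_rw [(stmt4sc_inj hm).eq_iff]
  simp

lemma stmt4_Tval (T : Fin m → Fin m → Fin m → ℂ)
    (hT : T = E (stmt4z hm) (stmt4z hm) (stmt4z hm) +
      ∑ ρ : Fin (m - 1), (E (stmt4z hm) (stmt4sc hm ρ) (stmt4sc hm ρ) + E (stmt4sc hm ρ) (stmt4z hm) (stmt4sc hm ρ)))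
    (i j k : Fin m) :
    T i j k = (if i = stmt4z hm ∧ j = k then 1 else 0) +
      (if i = k ∧ j = stmt4z hm ∧ i ≠ stmt4z hm then 1 else 0) := by
  rw [hT]
  simp only [Pi.add_apply, Finset.sum_apply, E]
  rcases stmt4_cases hm k with hk | ⟨κ, hk⟩
  · subst hk
    rw [Finset.sum_eq_zero (fun ρ _ => ?_)]
    · by_cases hi : i = stmt4z hm <;> by_cases hj : j = stmt4z hm <;> simp [hi, hj]
    · rw [if_neg (fun h => (Ne.symm (stmt4sc_ne hm ρ)) h.2.2),
        if_neg (fun h => (Ne.symm (stmt4sc_ne hm ρ)) h.2.2), add_zero]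
  · subst hk
    rw [Finset.sum_eq_single κ (fun ρ _ hρ => ?_) (by simp)]
    · have hkz : stmt4sc hm κ ≠ stmt4z hm := stmt4sc_ne hm κ
      by_cases hi : i = stmt4z hm <;> by_cases hj : j = stmt4z hm <;>
        by_cases hi2 : i = stmt4sc hm κ <;> by_cases hj2 : j = stmt4sc hm κ <;>
        simp_all <;> simp [Ne.symm hkz]
    · have hne : stmt4sc hm κ ≠ stmt4sc hm ρ := fun h => hρ ((stmt4sc_inj hm h).symm)
      rw [if_neg (fun h => hne h.2.2), if_neg (fun h => hne h.2.2), add_zero]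

def stmt4dl (a : Fin m) : Fin m → ℂ := fun i => if i = a then 1 else 0

lemma stmt4_repr {r : ℕ} {ι : Type} [Fintype ι] (hcard : Fintype.card ι = r)
    (X : Fin m → Fin m → Fin m → ℂ) (u v w : ι → Fin m → ℂ)
    (hX : ∀ i j k, X i j k = ∑ t, u t i * v t j * w t k) :
    ∃ (u' : Fin r → Fin m → ℂ) (v' : Fin r → Fin m → ℂ) (w' : Fin r → Fin m → ℂ),
      X = fun i j k => ∑ s : Fin r, u' s i * v' s j * w' s k := by
  let e := Fintype.equivFinOfCardEq hcard
  refine ⟨u ∘ e.symm, v ∘ e.symm, w ∘ e.symm, ?_⟩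
  funext i j k
  rw [hX]
  exact Fintype.sum_equiv e (fun t => u t i * v t j * w t k)
    (fun s => (u ∘ e.symm) s i * (v ∘ e.symm) s j * (w ∘ e.symm) s k)
    (fun t => by simp)

lemma stmt4_rank_ub (T : Fin m → Fin m → Fin m → ℂ)
    (tval : ∀ i j k, T i j k = (if i = stmt4z hm ∧ j = k then 1 else 0) +
      (if i = k ∧ j = stmt4z hm ∧ i ≠ stmt4z hm then 1 else 0)) :
    ∃ (u' : Fin (2 * m - 1) → Fin m → ℂ) (v' : Fin (2 * m - 1) → Fin m → ℂ)
      (w' : Fin (2 * m - 1) → Fin m → ℂ),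
      T = fun i j k => ∑ s : Fin (2 * m - 1), u' s i * v' s j * w' s k := by
  have hcard : Fintype.card (Fin 1 ⊕ (Fin (m - 1) ⊕ Fin (m - 1))) = 2 * m - 1 := by
    simp; omega
  refine stmt4_repr hcard T
    (Sum.elim (fun _ => stmt4dl (stmt4z hm)) (Sum.elim (fun _ => stmt4dl (stmt4z hm)) (fun ρ => stmt4dl (stmt4sc hm ρ))))
    (Sum.elim (fun _ => stmt4dl (stmt4z hm)) (Sum.elim (fun ρ => stmt4dl (stmt4sc hm ρ)) (fun _ => stmt4dl (stmt4z hm))))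
    (Sum.elim (fun _ => stmt4dl (stmt4z hm)) (Sum.elim (fun ρ => stmt4dl (stmt4sc hm ρ)) (fun ρ => stmt4dl (stmt4sc hm ρ))))
    (fun i j k => ?_)
  rw [tval i j k]
  rw [Fintype.sum_sum_type, Fintype.sum_sum_type, Fin.sum_univ_one]
  simp only [Sum.elim_inl, Sum.elim_inr]
  rcases stmt4_cases hm k with hk | ⟨κ, hk⟩ <;> subst hk
  · rw [Finset.sum_eq_zero (fun ρ _ => by simp [stmt4dl, Ne.symm (stmt4sc_ne hm ρ)]),
      Finset.sum_eq_zero (fun ρ _ => by simp [stmt4dl, Ne.symm (stmt4sc_ne hm ρ)])]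
    by_cases hi : i = stmt4z hm <;> by_cases hj : j = stmt4z hm <;> simp [stmt4dl, hi, hj]
  · have h1 : (∑ ρ : Fin (m-1), stmt4dl (stmt4z hm) i * stmt4dl (stmt4sc hm ρ) j * stmt4dl (stmt4sc hm ρ) (stmt4sc hm κ))
        = stmt4dl (stmt4z hm) i * stmt4dl (stmt4sc hm κ) j := by
      rw [← stmt4_sum_single hm (fun ρ => stmt4dl (stmt4z hm) i * stmt4dl (stmt4sc hm ρ) j) κ]
      exact Finset.sum_congr rfl fun ρ _ => by
        simp only [stmt4dl]; split_ifs <;> simp_all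
    have h2 : (∑ ρ : Fin (m-1), stmt4dl (stmt4sc hm ρ) i * stmt4dl (stmt4z hm) j * stmt4dl (stmt4sc hm ρ) (stmt4sc hm κ))
        = stmt4dl (stmt4sc hm κ) i * stmt4dl (stmt4z hm) j := by
      rw [← stmt4_sum_single hm (fun ρ => stmt4dl (stmt4sc hm ρ) i * stmt4dl (stmt4z hm) j) κ]
      refine Finset.sum_congr rfl fun ρ _ => ?_
      by_cases h : stmt4sc hm κ = stmt4sc hm ρ
      · rw [if_pos h, ← h]; simp [stmt4dl]
      · rw [if_neg h]; simp only [stmt4dl]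
        rw [if_neg (fun hh : stmt4sc hm κ = stmt4sc hm ρ => h hh)]
        ring
    rw [h1, h2]
    have hkz := stmt4sc_ne hm κ
    by_cases hi : i = stmt4z hm <;> by_cases hj : j = stmt4z hm <;>
      by_cases hi2 : i = stmt4sc hm κ <;> by_cases hj2 : j = stmt4sc hm κ <;>
      simp_all [stmt4dl]

lemma stmt4_border_ub (T : Fin m → Fin m → Fin m → ℂ)
    (tval : ∀ i j k, T i j k = (if i = stmt4z hm ∧ j = k then 1 else 0) +
      (if i = k ∧ j = stmt4z hm ∧ i ≠ stmt4z hm then 1 else 0)) :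
    T ∈ closure {T' : Fin m → Fin m → Fin m → ℂ |
      ∃ (u : Fin m → Fin m → ℂ) (v : Fin m → Fin m → ℂ) (w : Fin m → Fin m → ℂ),
        T' = fun i j k => ∑ s : Fin m, u s i * v s j * w s k} := by
  classical
  set D : Fin m → Fin m → Fin m → ℂ :=
    fun i j k => if i = j ∧ i = k ∧ i ≠ stmt4z hm then 1 else 0 with hD
  have hmem : ∀ ε : ℂ, ε ≠ 0 → (T + ε • D) ∈ {T' : Fin m → Fin m → Fin m → ℂ |
      ∃ (u : Fin m → Fin m → ℂ) (v : Fin m → Fin m → ℂ) (w : Fin m → Fin m → ℂ),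
        T' = fun i j k => ∑ s : Fin m, u s i * v s j * w s k} := by
    intro ε hε
    have hcard : Fintype.card (Fin (m - 1) ⊕ Fin 1) = m := by simp; omega
    refine stmt4_repr hcard (T + ε • D)
      (Sum.elim (fun ρ => fun i =>
          (if i = stmt4z hm then 1 else 0) + ε * (if i = stmt4sc hm ρ then 1 else 0))
        (fun _ => fun i => if i = stmt4z hm then 1 else 0))
      (Sum.elim (fun ρ => fun j =>
          (if j = stmt4z hm then 1 else 0) + ε * (if j = stmt4sc hm ρ then 1 else 0))
        (fun _ => fun j => if j = stmt4z hm then 1 else 0))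
      (Sum.elim (fun ρ => fun k => ε⁻¹ * (if k = stmt4sc hm ρ then 1 else 0))
        (fun _ => fun k => if k = stmt4z hm then 1 else -ε⁻¹))
      (fun i j k => ?_)
    rw [Fintype.sum_sum_type, Fin.sum_univ_one]
    simp only [Sum.elim_inl, Sum.elim_inr, Pi.add_apply, Pi.smul_apply, smul_eq_mul]
    rw [tval i j k, hD]
    rcases stmt4_cases hm k with hk | ⟨κ, hk⟩ <;> subst hk
    · rw [Finset.sum_eq_zero (fun ρ _ => by
        rw [if_neg (Ne.symm (stmt4sc_ne hm ρ))]; ring)]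
      by_cases hi : i = stmt4z hm <;> by_cases hj : j = stmt4z hm <;> (try simp_all) <;>
        (first
          | rfl
          | (exact fun h => hj h.symm)
          | (exact fun h => hi h.symm)
          | ring
          | (field_simp; try ring))
    · have hsum : (∑ ρ : Fin (m - 1),
          ((if i = stmt4z hm then 1 else 0) + ε * (if i = stmt4sc hm ρ then 1 else 0)) *
            ((if j = stmt4z hm then 1 else 0) + ε * (if j = stmt4sc hm ρ then 1 else 0)) *
            (ε⁻¹ * (if stmt4sc hm κ = stmt4sc hm ρ then 1 else 0)))
          = ((if i = stmt4z hm then 1 else 0) + ε * (if i = stmt4sc hm κ then 1 else 0)) *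
            ((if j = stmt4z hm then 1 else 0) + ε * (if j = stmt4sc hm κ then 1 else 0)) * ε⁻¹ := by
        rw [← stmt4_sum_single hm (fun ρ =>
          ((if i = stmt4z hm then 1 else 0) + ε * (if i = stmt4sc hm ρ then 1 else 0)) *
            ((if j = stmt4z hm then 1 else 0) + ε * (if j = stmt4sc hm ρ then 1 else 0)) * ε⁻¹) κ]
        exact Finset.sum_congr rfl fun ρ _ => by split_ifs <;> ring
      rw [hsum, if_neg (stmt4sc_ne hm κ)]
      have hkz := stmt4sc_ne hm κ
      by_cases hi : i = stmt4z hm <;> by_cases hj : j = stmt4z hm <;>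
        by_cases hi2 : i = stmt4sc hm κ <;> by_cases hj2 : j = stmt4sc hm κ <;>
        (try simp_all) <;>
        (first
          | rfl
          | (exact fun h => hj2 h.symm)
          | (exact fun h => hi2 h.symm)
          | (exact fun h => hj h.symm)
          | (exact fun h => hi h.symm)
          | ring
          | (field_simp; try ring))
  have hc : Filter.Tendsto (fun n : ℕ => ((((n : ℝ) + 1)⁻¹ : ℝ) : ℂ))
      Filter.atTop (nhds 0) := by
    have h1 : Filter.Tendsto (fun n : ℕ => (((n : ℝ) + 1)⁻¹ : ℝ))
        Filter.atTop (nhds 0) := by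
      simpa [one_div] using tendsto_one_div_add_atTop_nhds_zero_nat (𝕜 := ℝ)
    have h2 := (Complex.continuous_ofReal.tendsto 0).comp h1
    simpa [Function.comp_def] using h2
  have hlim : Filter.Tendsto (fun n : ℕ => T + ((((n : ℝ) + 1)⁻¹ : ℝ) : ℂ) • D)
      Filter.atTop (nhds T) := by
    have h2 : Filter.Tendsto (fun n : ℕ => T + ((((n : ℝ) + 1)⁻¹ : ℝ) : ℂ) • D)
        Filter.atTop (nhds (T + (0 : ℂ) • D)) :=
      Filter.Tendsto.add tendsto_const_nhds (Filter.Tendsto.smul hc tendsto_const_nhds)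
    simpa using h2
  refine mem_closure_of_tendsto hlim (Filter.Eventually.of_forall fun n => hmem _ ?_)
  have : (((n : ℝ) + 1)⁻¹ : ℝ) ≠ 0 := by positivity
  exact_mod_cast Complex.ofReal_ne_zero.mpr this

lemma stmt4_border_lb (T : Fin m → Fin m → Fin m → ℂ)
    (tval : ∀ i j k, T i j k = (if i = stmt4z hm ∧ j = k then 1 else 0) +
      (if i = k ∧ j = stmt4z hm ∧ i ≠ stmt4z hm then 1 else 0))
    {r : ℕ} (hr : r < m)
    (hmem : T ∈ closure {T' : Fin m → Fin m → Fin m → ℂ |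
      ∃ (u : Fin r → Fin m → ℂ) (v : Fin r → Fin m → ℂ) (w : Fin r → Fin m → ℂ),
        T' = fun i j k => ∑ s : Fin r, u s i * v s j * w s k}) : False := by
  classical
  have hcont : Continuous fun X : Fin m → Fin m → Fin m → ℂ =>
      (Matrix.of fun j k => X (stmt4z hm) j k).det :=
    Continuous.matrix_det (continuous_matrix fun j k =>
      (continuous_apply k).comp ((continuous_apply j).comp (continuous_apply (stmt4z hm))))
  have hC : IsClosed {X : Fin m → Fin m → Fin m → ℂ |
      (Matrix.of fun j k => X (stmt4z hm) j k).det = 0} := isClosed_eq hcont continuous_const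
  have hsub : {T' : Fin m → Fin m → Fin m → ℂ |
      ∃ (u : Fin r → Fin m → ℂ) (v : Fin r → Fin m → ℂ) (w : Fin r → Fin m → ℂ),
        T' = fun i j k => ∑ s : Fin r, u s i * v s j * w s k} ⊆
      {X : Fin m → Fin m → Fin m → ℂ |
        (Matrix.of fun j k => X (stmt4z hm) j k).det = 0} := by
    rintro X ⟨u, v, w, rfl⟩
    have := stmt4_det_zero_of_sum_outer (Finset.univ : Finset (Fin r))
      (fun s j => u s (stmt4z hm) * v s j) w (by simpa using hr)
    simpa using this
  have h0 : (Matrix.of fun j k => T (stmt4z hm) j k).det = 0 :=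
    closure_minimal hsub hC hmem
  have h1 : (Matrix.of fun j k => T (stmt4z hm) j k) = 1 := by
    ext j k
    rw [Matrix.of_apply, tval, Matrix.one_apply]
    simp
  rw [h1, Matrix.det_one] at h0
  exact one_ne_zero h0

lemma stmt4_rank_lb (T : Fin m → Fin m → Fin m → ℂ)
    (tval : ∀ i j k, T i j k = (if i = stmt4z hm ∧ j = k then 1 else 0) +
      (if i = k ∧ j = stmt4z hm ∧ i ≠ stmt4z hm then 1 else 0))
    {r : ℕ} (u v w : Fin r → Fin m → ℂ)
    (hdc : T = fun i j k => ∑ s : Fin r, u s i * v s j * w s k) :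
    2 * m - 1 ≤ r := by
  classical
  by_contra hlt
  push_neg at hlt
  -- the "tails" of the first factors
  set ub : Fin r → (Fin (m - 1) → ℂ) := fun s ρ => u s (stmt4sc hm ρ) with hub
  -- Step 1: the tails span ℂ^{m-1}
  have hspan : Submodule.span ℂ (Set.range ub) = ⊤ := by
    by_contra hne
    obtain ⟨f, hf0, hfbot⟩ :=
      Submodule.exists_dual_map_eq_bot_of_lt_top (lt_top_iff_ne_top.mpr hne) inferInstance
    have hf : ∀ s, f (ub s) = 0 := by
      intro s
      have h1 : f (ub s) ∈ Submodule.map f (Submodule.span ℂ (Set.range ub)) :=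
        ⟨ub s, Submodule.subset_span ⟨s, rfl⟩, rfl⟩
      rwa [hfbot, Submodule.mem_bot] at h1
    set ξ : Fin (m - 1) → ℂ := fun ρ => f (fun ρ' => if ρ = ρ' then 1 else 0) with hξ
    have hξ0 : ∃ ρ0, ξ ρ0 ≠ 0 := by
      by_contra hc
      push_neg at hc
      apply hf0
      refine LinearMap.ext fun y => ?_
      rw [LinearMap.zero_apply, stmt4_dual_rep f y]
      refine Finset.sum_eq_zero fun ρ _ => ?_
      have h := hc ρ
      simp only [hξ] at h
      rw [h, mul_zero]
    obtain ⟨ρ0, hρ0⟩ := hξ0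
    have h1 : ∑ ρ, ξ ρ * T (stmt4sc hm ρ) (stmt4z hm) (stmt4sc hm ρ0) = ξ ρ0 := by
      have hval : ∀ ρ, T (stmt4sc hm ρ) (stmt4z hm) (stmt4sc hm ρ0) = if ρ = ρ0 then 1 else 0 := by
        intro ρ
        rw [tval]
        rw [if_neg (fun h => stmt4sc_ne hm ρ h.1)]
        rw [zero_add]
        by_cases h : ρ = ρ0
        · subst h; rw [if_pos ⟨rfl, rfl, stmt4sc_ne hm ρ⟩, if_pos rfl]
        · rw [if_neg (fun hh => h (stmt4sc_inj hm hh.1)), if_neg h]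
      simp_rw [hval]
      simp
    have h2 : ∑ ρ, ξ ρ * T (stmt4sc hm ρ) (stmt4z hm) (stmt4sc hm ρ0) = 0 := by
      have hrw : ∀ ρ, T (stmt4sc hm ρ) (stmt4z hm) (stmt4sc hm ρ0)
          = ∑ s, u s (stmt4sc hm ρ) * v s (stmt4z hm) * w s (stmt4sc hm ρ0) := fun ρ => by rw [hdc]
      simp_rw [hrw, Finset.mul_sum]
      rw [Finset.sum_comm]
      refine Finset.sum_eq_zero fun s _ => ?_
      have : ∑ ρ, ξ ρ * (u s (stmt4sc hm ρ) * v s (stmt4z hm) * w s (stmt4sc hm ρ0))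
          = (v s (stmt4z hm) * w s (stmt4sc hm ρ0)) * ∑ ρ, ub s ρ * ξ ρ := by
        rw [Finset.mul_sum]
        exact Finset.sum_congr rfl fun ρ _ => by rw [hub]; ring
      rw [this, ← stmt4_dual_rep f (ub s), hf s, mul_zero]
    rw [h1] at h2
    exact hρ0 h2
  -- Step 2: extract a linearly independent spanning subset of the tails
  obtain ⟨t, hts, htsp, htli⟩ := exists_linearIndependent ℂ (Set.range ub)
  rw [hspan] at htsp
  have htfin : t.Finite := Set.Finite.subset (Set.finite_range ub) hts
  haveI : Fintype t := htfin.fintype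
  let b : Module.Basis t ℂ (Fin (m - 1) → ℂ) := Module.Basis.mk htli (by rw [Subtype.range_coe, htsp])
  have hcardt : Fintype.card t = m - 1 := by
    have h1 := Module.finrank_eq_card_basis b
    rw [Module.finrank_pi] at h1
    simpa using h1.symm
  -- representatives
  have hrepex : ∀ x : t, ∃ s : Fin r, ub s = (x : Fin (m - 1) → ℂ) := fun x => hts x.2
  choose rep hrep using hrepex
  have hrepinj : Function.Injective rep := by
    intro a b' hab
    apply Subtype.ext
    rw [← hrep a, ← hrep b', hab]
  -- the substitution functional
  let g : (Fin (m - 1) → ℂ) →ₗ[ℂ] ℂ := b.constr ℂ (fun x => - u (rep x) (stmt4z hm))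
  have hgb : ∀ x : t, g (x : Fin (m - 1) → ℂ) = - u (rep x) (stmt4z hm) := by
    intro x
    have h1 := b.constr_basis ℂ (fun x => - u (rep x) (stmt4z hm)) x
    rwa [Module.Basis.mk_apply] at h1
  set c : Fin r → ℂ := fun s => u s (stmt4z hm) + g (ub s) with hc
  have hckill : ∀ x : t, c (rep x) = 0 := by
    intro x
    rw [hc]
    simp only []
    rw [hrep x, hgb x, add_neg_cancel]
  -- the matrix N
  set lam : Fin (m - 1) → ℂ := fun ρ => g (fun ρ' => if ρ = ρ' then 1 else 0) with hlam
  set N : Matrix (Fin m) (Fin m) ℂ :=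
    Matrix.of (fun j k => ∑ s : Fin r, (c s * v s j) * w s k) with hN
  have hNentry : ∀ j k, N j k
      = T (stmt4z hm) j k + ∑ ρ, lam ρ * T (stmt4sc hm ρ) j k := by
    intro j k
    have hTz : T (stmt4z hm) j k = ∑ s, u s (stmt4z hm) * v s j * w s k := by rw [hdc]
    have hTρ : ∀ ρ, T (stmt4sc hm ρ) j k = ∑ s, ub s ρ * v s j * w s k := fun ρ => by
      rw [hdc, hub]
    have hL : N j k = ∑ s : Fin r, (c s * v s j) * w s k := rfl
    rw [hL, hTz]
    simp_rw [hTρ, Finset.mul_sum]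
    rw [Finset.sum_comm, ← Finset.sum_add_distrib]
    refine Finset.sum_congr rfl fun s _ => ?_
    have h1 : ∑ ρ, lam ρ * (ub s ρ * v s j * w s k)
        = (∑ ρ, ub s ρ * lam ρ) * (v s j * w s k) := by
      rw [Finset.sum_mul]
      exact Finset.sum_congr rfl fun ρ _ => by ring
    rw [h1]
    simp only [hlam]
    rw [← stmt4_dual_rep g (ub s)]
    simp only [hc]
    ring
  -- N is upper triangular with unit diagonal
  have hTzval : ∀ j k, T (stmt4z hm) j k = if j = k then (1 : ℂ) else 0 := by
    intro j k
    rw [tval]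
    simp
  have hTρval : ∀ ρ j k, T (stmt4sc hm ρ) j k
      = if j = stmt4z hm ∧ k = stmt4sc hm ρ then (1 : ℂ) else 0 := by
    intro ρ j k
    rw [tval]
    rw [if_neg (fun h => stmt4sc_ne hm ρ h.1), zero_add]
    by_cases h : j = stmt4z hm ∧ k = stmt4sc hm ρ
    · rw [if_pos ⟨h.2.symm, h.1, stmt4sc_ne hm ρ⟩, if_pos h]
    · rw [if_neg, if_neg h]
      rintro ⟨h1, h2, h3⟩
      exact h ⟨h2, h1.symm⟩
  have htri : N.BlockTriangular id := by
    intro j k hjk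
    rw [hNentry, hTzval]
    rw [if_neg (fun h => absurd h (by exact fun hh => (lt_irrefl _ (hh ▸ hjk))))]
    rw [zero_add]
    refine Finset.sum_eq_zero fun ρ _ => ?_
    rw [hTρval]
    rw [if_neg, mul_zero]
    rintro ⟨h1, h2⟩
    rw [h1] at hjk
    simp only [id] at hjk
    exact absurd hjk (by simp [stmt4z, Fin.lt_def])
  have hdiag : ∀ j, N j j = 1 := by
    intro j
    rw [hNentry, hTzval, if_pos rfl]
    rw [Finset.sum_eq_zero fun ρ _ => ?_, add_zero]
    rw [hTρval, if_neg, mul_zero]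
    rintro ⟨h1, h2⟩
    exact stmt4sc_ne hm ρ (h2.symm.trans h1)
  have hdet : N.det = 1 := by
    rw [Matrix.det_of_upperTriangular htri]
    simp [hdiag]
  -- counting
  set F : Finset (Fin r) := Finset.univ.filter (fun s => c s ≠ 0) with hF
  have hNF : N = Matrix.of fun j k => ∑ s ∈ F, (c s * v s j) * w s k := by
    ext j k
    rw [hN]
    simp only [Matrix.of_apply]
    refine (Finset.sum_subset (Finset.subset_univ F) fun s _ hs => ?_).symm
    have : c s = 0 := by
      by_contra hcs
      exact hs (Finset.mem_filter.mpr ⟨Finset.mem_univ s, hcs⟩)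
    rw [this]
    ring
  have hdisj : Disjoint (Finset.univ.image rep) F := by
    rw [Finset.disjoint_left]
    intro s hs hsF
    obtain ⟨x, _, rfl⟩ := Finset.mem_image.mp hs
    exact (Finset.mem_filter.mp hsF).2 (hckill x)
  have hcount : (m - 1) + F.card ≤ r := by
    have h1 : (Finset.univ.image rep).card = m - 1 := by
      rw [Finset.card_image_of_injective _ hrepinj, Finset.card_univ, hcardt]
    have h2 := Finset.card_le_univ ((Finset.univ.image rep) ∪ F)
    rw [Finset.card_union_of_disjoint hdisj, h1] at h2
    simpa using h2
  have hFlt : F.card < m := by omega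
  have := stmt4_det_zero_of_sum_outer F (fun s j => c s * v s j) w hFlt
  rw [← hNF, hdet] at this
  exact one_ne_zero this

end Stmt4Aux

/-- For `m ≥ 3`, the tensor
`T_{utriv,m} = e_1⊗e_1⊗e_1 + ∑_{ρ=2}^m (e_1⊗e_ρ⊗e_ρ + e_ρ⊗e_1⊗e_ρ)` has border rank `m`
and tensor rank `2m - 1`. -/
theorem stmt_4 (m : ℕ) (hm : 3 ≤ m) (T : Fin m → Fin m → Fin m → ℂ)
    (hT : T =
      E ⟨0, by omega⟩ ⟨0, by omega⟩ ⟨0, by omega⟩ +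
      ∑ ρ : Fin (m - 1),
        (E ⟨0, by omega⟩ ⟨(ρ : ℕ) + 1, by have := ρ.isLt; omega⟩
            ⟨(ρ : ℕ) + 1, by have := ρ.isLt; omega⟩ +
         E ⟨(ρ : ℕ) + 1, by have := ρ.isLt; omega⟩ ⟨0, by omega⟩
            ⟨(ρ : ℕ) + 1, by have := ρ.isLt; omega⟩)) :
    borderRank T = m ∧ tensorRank T = 2 * m - 1 := by
  have tval : ∀ i j k, T i j k = (if i = stmt4z hm ∧ j = k then 1 else 0) +
      (if i = k ∧ j = stmt4z hm ∧ i ≠ stmt4z hm then 1 else 0) := stmt4_Tval hm T hT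
  constructor
  · apply le_antisymm
    · exact Nat.sInf_le (stmt4_border_ub hm T tval)
    · refine le_csInf ⟨m, stmt4_border_ub hm T tval⟩ fun r hr => ?_
      by_contra hlt
      push_neg at hlt
      exact stmt4_border_lb hm T tval hlt hr
  · apply le_antisymm
    · obtain ⟨u, v, w, hdec⟩ := stmt4_rank_ub hm T tval
      exact Nat.sInf_le ⟨u, v, w, hdec⟩
    · obtain ⟨u0, v0, w0, hdec0⟩ := stmt4_rank_ub hm T tval
      refine le_csInf ⟨2 * m - 1, u0, v0, w0, hdec0⟩ fun r hr => ?_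
      obtain ⟨u, v, w, hdec⟩ := hr
      exact stmt4_rank_lb hm T tval u v w hdec
end

section
/- Let T ∈ ℂ^m ⊗ ℂ^m ⊗ ℂ^m be concise. If GR(T) < m, then the tensor rank satisfies R(T) > m. -/
open scoped BigOperators

set_option linter.unusedSectionVars false
set_option maxHeartbeats 1000000
section Aux
section CL
variable {R : Type} [CommRing R]

private def Efun {n : ℕ} (x : Fin (n+1) → R) (k : Fin (n+1) → ℕ) (a : Fin (n+1) → R)
    (i : ℕ) : R :=
  (∏ j ∈ Finset.univ.filter (fun j : Fin (n+1) => i ≤ (j : ℕ)), x j ^ k j) +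
    ∑ l ∈ Finset.univ.filter (fun l : Fin (n+1) => i ≤ (l : ℕ)),
      (∏ j ∈ Finset.univ.filter (fun j : Fin (n+1) => i ≤ (j : ℕ) ∧ j ≤ l), x j ^ k j) *
        (a l * x l)

private lemma Efun_rec {n : ℕ} (x : Fin (n+1) → R) (k : Fin (n+1) → ℕ) (a : Fin (n+1) → R)
    (i : ℕ) (hi : i ≤ n) :
    Efun x k a i = x ⟨i, by omega⟩ ^ k ⟨i, by omega⟩ *
      (Efun x k a (i+1) + a ⟨i, by omega⟩ * x ⟨i, by omega⟩) := by
  set ι : Fin (n+1) := ⟨i, by omega⟩ with hι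
  have hF : Finset.univ.filter (fun j : Fin (n+1) => i ≤ (j : ℕ)) =
      insert ι (Finset.univ.filter (fun j : Fin (n+1) => i + 1 ≤ (j : ℕ))) := by
    ext j
    simp only [Finset.mem_filter, Finset.mem_insert, Finset.mem_univ, true_and]
    constructor
    · intro h
      rcases eq_or_lt_of_le h with h' | h'
      · left; exact (Fin.ext h'.symm)
      · right; omega
    · rintro (rfl | h)
      · exact le_refl _
      · omega
  have hιnot : ι ∉ Finset.univ.filter (fun j : Fin (n+1) => i + 1 ≤ (j : ℕ)) := by
    simp [hι]
  have hGι : Finset.univ.filter (fun j : Fin (n+1) => i ≤ (j : ℕ) ∧ j ≤ ι) = {ι} := by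
    ext j
    simp only [Finset.mem_filter, Finset.mem_singleton, Finset.mem_univ, true_and]
    constructor
    · rintro ⟨h1, h2⟩
      have : (j : ℕ) ≤ i := h2
      exact Fin.ext (show (j:ℕ) = i by omega)
    · rintro rfl; exact ⟨le_refl _, le_refl _⟩
  have hG : ∀ l : Fin (n+1), i + 1 ≤ (l : ℕ) →
      Finset.univ.filter (fun j : Fin (n+1) => i ≤ (j : ℕ) ∧ j ≤ l) =
        insert ι (Finset.univ.filter (fun j : Fin (n+1) => i + 1 ≤ (j : ℕ) ∧ j ≤ l)) := by
    intro l hl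
    ext j
    simp only [Finset.mem_filter, Finset.mem_insert, Finset.mem_univ, true_and]
    constructor
    · rintro ⟨h1, h2⟩
      rcases eq_or_lt_of_le h1 with h' | h'
      · left; exact Fin.ext h'.symm
      · right; exact ⟨by omega, h2⟩
    · rintro (rfl | ⟨h1, h2⟩)
      · refine ⟨le_refl _, ?_⟩
        rw [Fin.le_def]
        simp only [hι]
        omega
      · exact ⟨by omega, h2⟩
  have hιnotG : ∀ l : Fin (n+1),
      ι ∉ Finset.univ.filter (fun j : Fin (n+1) => i + 1 ≤ (j : ℕ) ∧ j ≤ l) := by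
    intro l; simp [hι]
  unfold Efun
  rw [hF, Finset.prod_insert hιnot, Finset.sum_insert hιnot, hGι]
  rw [Finset.sum_congr rfl (fun l hl => by
    rw [hG l (by simpa using hl), Finset.prod_insert (hιnotG l), mul_assoc])]
  rw [Finset.prod_singleton, ← Finset.mul_sum]
  ring

private lemma Efun_notMem {n : ℕ} (q : Fin (n + 2) → Ideal R) (hq : ∀ i, (q i).IsPrime)
    (hmono : StrictMono q) (x : Fin (n + 1) → R)
    (hx1 : ∀ i : Fin (n+1), x i ∈ q i.succ)
    (hx2 : ∀ i : Fin (n+1), x i ∉ q i.castSucc)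
    (k : Fin (n + 1) → ℕ) (a : Fin (n + 1) → R) :
    ∀ d i : ℕ, (h : i + d = n + 1) → Efun x k a i ∉ q ⟨i, by omega⟩ := by
  intro d
  induction d with
  | zero =>
    intro i hi
    have hi' : i = n + 1 := by omega
    subst hi'
    have hF : Finset.univ.filter (fun j : Fin (n+1) => n + 1 ≤ (j : ℕ)) = ∅ := by
      ext j; simp only [Finset.mem_filter, Finset.mem_univ, true_and, Finset.notMem_empty,
        iff_false]
      omega
    have : Efun x k a (n+1) = 1 := by
      unfold Efun; rw [hF]; simp
    rw [this]
    exact fun h => (hq _).ne_top (Ideal.eq_top_of_isUnit_mem _ h isUnit_one)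
  | succ d ih =>
    intro i hi
    have hin : i ≤ n := by omega
    set ι : Fin (n+1) := ⟨i, by omega⟩ with hι
    rw [Efun_rec x k a i hin]
    intro hmem
    rcases (hq _).mem_or_mem hmem with h1 | h2
    · have : x ι ∈ q ⟨i, by omega⟩ := (hq _).mem_of_pow_mem _ h1
      have hcs : ι.castSucc = (⟨i, by omega⟩ : Fin (n+2)) := rfl
      exact hx2 ι (by rwa [hcs])
    · have hlt : (⟨i, by omega⟩ : Fin (n+2)) < ⟨i+1, by omega⟩ := by
        simp [Fin.lt_def]
      have h2' : Efun x k a (i+1) + a ι * x ι ∈ q ⟨i+1, by omega⟩ :=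
        (hmono hlt).le h2
      have hxι : x ι ∈ q ⟨i+1, by omega⟩ := by
        have : ι.succ = (⟨i+1, by omega⟩ : Fin (n+2)) := rfl
        rw [← this]; exact hx1 ι
      have : Efun x k a (i+1) ∈ q ⟨i+1, by omega⟩ := by
        have hsub : (Efun x k a (i+1) + a ι * x ι) - a ι * x ι ∈ q ⟨i+1, by omega⟩ :=
          Ideal.sub_mem _ h2' (Ideal.mul_mem_left _ (a ι) hxι)
        simpa using hsub
      exact ih (i+1) (by omega) this

lemma chain_blocking {n : ℕ} (q : Fin (n + 2) → Ideal R) (hq : ∀ i, (q i).IsPrime)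
    (hmono : StrictMono q) (x : Fin (n + 1) → R)
    (hx1 : ∀ i : Fin (n+1), x i ∈ q i.succ)
    (hx2 : ∀ i : Fin (n+1), x i ∉ q i.castSucc)
    (k : Fin (n + 1) → ℕ) (a : Fin (n + 1) → R) :
    (∏ j, x j ^ k j) + ∑ i, (∏ j ∈ Finset.Iic i, x j ^ k j) * (a i * x i) ≠ 0 := by
  have h0 : Efun x k a 0 ∉ q ⟨0, by omega⟩ :=
    Efun_notMem q hq hmono x hx1 hx2 k a (n+1) 0 (by omega)
  have hE0 : Efun x k a 0 =
      (∏ j, x j ^ k j) + ∑ i, (∏ j ∈ Finset.Iic i, x j ^ k j) * (a i * x i) := by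
    unfold Efun
    congr 1
    · apply Finset.prod_congr _ (fun _ _ => rfl)
      ext j; simp
    · rw [show Finset.univ.filter (fun l : Fin (n+1) => 0 ≤ (l : ℕ)) = Finset.univ by
        ext l; simp]
      apply Finset.sum_congr rfl
      intro l _
      congr 1
      apply Finset.prod_congr _ (fun _ _ => rfl)
      ext j; simp [Finset.mem_Iic]
  intro hcon
  rw [hE0, hcon] at h0
  exact h0 (Ideal.zero_mem _)
end CL

section Sing
variable {R : Type} [CommRing R] [Algebra ℂ R]

private lemma prod_split {n : ℕ} (i : Fin (n+1)) (f : Fin (n+1) → R) :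
    ∏ j, f j = (∏ j ∈ Finset.Iic i, f j) * ∏ j ∈ Finset.Ioi i, f j := by
  rw [← Finset.prod_union]
  · congr 1
    ext j
    simp only [Finset.mem_union, Finset.mem_Iic, Finset.mem_Ioi, Finset.mem_univ, true_iff]
    exact le_or_gt j i
  · rw [Finset.disjoint_left]
    intro j hj hj'
    simp only [Finset.mem_Iic] at hj
    simp only [Finset.mem_Ioi] at hj'
    exact absurd hj (not_le.mpr hj')

lemma exists_singular {n : ℕ} (x : Fin (n+1) → R) (Q : MvPolynomial (Fin (n+1)) ℂ)
    (hQ : Q ≠ 0) (h0 : MvPolynomial.aeval x Q = 0) :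
    ∃ (k : Fin (n+1) → ℕ) (a : Fin (n+1) → R),
      (∏ j, x j ^ k j) + ∑ i, (∏ j ∈ Finset.Iic i, x j ^ k j) * (a i * x i) = 0 := by
  classical
  -- expansion of aeval
  have hexp : (MvPolynomial.aeval x) Q =
      ∑ β ∈ Q.support, algebraMap ℂ R (Q.coeff β) * ∏ j, x j ^ β j := by
    rw [MvPolynomial.aeval_def, MvPolynomial.eval₂_eq]
    apply Finset.sum_congr rfl
    intro β _
    congr 1
    apply Finset.prod_subset (Finset.subset_univ _)
    intro j _ hj
    rw [Finsupp.notMem_support_iff.mp hj, pow_zero]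
  -- the lex-minimal monomial
  have hsupp : (Q.support.image (toLex : (Fin (n+1) →₀ ℕ) → Lex (Fin (n+1) →₀ ℕ))).Nonempty :=
    Finset.Nonempty.image (MvPolynomial.support_nonempty.mpr hQ) _
  obtain ⟨α, hαmem, hα⟩ := Finset.mem_image.mp (Finset.min'_mem _ hsupp)
  have hmin : ∀ β ∈ Q.support, β ≠ α → toLex α < toLex β := by
    intro β hβ hne
    have h1 : (Q.support.image toLex).min' hsupp ≤ toLex β :=
      Finset.min'_le _ _ (Finset.mem_image_of_mem _ hβ)
    rw [← hα] at h1
    exact lt_of_le_of_ne h1 (fun h => hne (toLex.injective h.symm))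
  -- witness function
  set wP : (Fin (n+1) →₀ ℕ) → Prop := fun β => ∃ i, (∀ j, j < i → α j = β j) ∧ α i < β i
    with hwP
  set w : (Fin (n+1) →₀ ℕ) → Fin (n+1) :=
    fun β => if h : wP β then h.choose else ⟨0, Nat.succ_pos n⟩ with hw
  have hwspec : ∀ β ∈ Q.support.erase α,
      (∀ j, j < w β → α j = β j) ∧ α (w β) < β (w β) := by
    intro β hβ
    have hne : β ≠ α := Finset.ne_of_mem_erase hβ
    have hlt := hmin β (Finset.mem_of_mem_erase hβ) hne
    have hP : wP β := by
      rw [Finsupp.Lex.lt_iff] at hlt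
      exact hlt
    rw [hw]
    simp only [dif_pos hP]
    exact hP.choose_spec
  set c := Q.coeff α with hc
  have hc0 : c ≠ 0 := by
    rwa [hc, ← MvPolynomial.mem_support_iff]
  -- definitions
  refine ⟨fun j => α j, fun i => algebraMap ℂ R c⁻¹ *
    ∑ β ∈ (Q.support.erase α).filter (fun β => w β = i),
      algebraMap ℂ R (Q.coeff β) * (x i ^ (β i - α i - 1) * ∏ j ∈ Finset.Ioi i, x j ^ β j), ?_⟩
  -- per-β computation
  have perβ : ∀ β ∈ Q.support.erase α,
      (∏ j ∈ Finset.Iic (w β), x j ^ α j) *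
        (x (w β) ^ (β (w β) - α (w β) - 1) * ∏ j ∈ Finset.Ioi (w β), x j ^ β j) * x (w β) =
      ∏ j, x j ^ β j := by
    intro β hβ
    obtain ⟨hw1, hw2⟩ := hwspec β hβ
    set i := w β
    rw [prod_split i (fun j => x j ^ β j)]
    have hIic : ∀ γ : Fin (n+1) →₀ ℕ, (∏ j ∈ Finset.Iic i, x j ^ γ j) =
        (∏ j ∈ Finset.Iio i, x j ^ γ j) * x i ^ γ i := by
      intro γ
      rw [← Finset.Iio_insert, Finset.prod_insert (by simp), mul_comm]
    rw [hIic α, hIic β]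
    have hIio : (∏ j ∈ Finset.Iio i, x j ^ α j) = ∏ j ∈ Finset.Iio i, x j ^ β j := by
      apply Finset.prod_congr rfl
      intro j hj
      rw [hw1 j (Finset.mem_Iio.mp hj)]
    rw [hIio]
    have hpow : x i ^ α i * x i ^ (β i - α i - 1) * x i = x i ^ β i := by
      rw [← pow_add, ← pow_succ]
      congr 1
      omega
    ring_nf
    rw [← hpow]
    ring
  -- assemble
  have hsum : ∑ i, (∏ j ∈ Finset.Iic i, x j ^ α j) *
      ((algebraMap ℂ R c⁻¹ *
        ∑ β ∈ (Q.support.erase α).filter (fun β => w β = i),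
          algebraMap ℂ R (Q.coeff β) *
            (x i ^ (β i - α i - 1) * ∏ j ∈ Finset.Ioi i, x j ^ β j)) * x i) =
      algebraMap ℂ R c⁻¹ *
        ∑ β ∈ Q.support.erase α, algebraMap ℂ R (Q.coeff β) * ∏ j, x j ^ β j := by
    rw [Finset.mul_sum]
    rw [← Finset.sum_fiberwise_of_maps_to (g := w) (t := Finset.univ)
      (fun β _ => Finset.mem_univ _)]
    apply Finset.sum_congr rfl
    intro i _
    rw [Finset.mul_sum, Finset.sum_mul, Finset.mul_sum]
    apply Finset.sum_congr rfl
    intro β hβ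
    rw [Finset.mem_filter] at hβ
    obtain ⟨hβ1, hβ2⟩ := hβ
    subst hβ2
    rw [← perβ β hβ1]
    ring
  rw [hsum]
  have hone : (∏ j, x j ^ α j) =
      algebraMap ℂ R c⁻¹ * (algebraMap ℂ R c * ∏ j, x j ^ α j) := by
    rw [← mul_assoc, ← map_mul, inv_mul_cancel₀ hc0, map_one, one_mul]
  rw [hone, ← mul_add]
  have : algebraMap ℂ R c * ∏ j, x j ^ α j +
      ∑ β ∈ Q.support.erase α, algebraMap ℂ R (Q.coeff β) * ∏ j, x j ^ β j =
      ∑ β ∈ Q.support, algebraMap ℂ R (Q.coeff β) * ∏ j, x j ^ β j := by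
    rw [hc]
    exact Finset.add_sum_erase _
      (fun β => algebraMap ℂ R (MvPolynomial.coeff β Q) * ∏ j, x j ^ β j) hαmem
  rw [this, ← hexp, h0, mul_zero]

end Sing

section Dim
variable {R : Type} [CommRing R]

lemma ringKrullDim_le_of_annihilated [Algebra ℂ R] (n : ℕ)
    (h : ∀ x : Fin (n+1) → R, ∃ Q : MvPolynomial (Fin (n+1)) ℂ,
      Q ≠ 0 ∧ MvPolynomial.aeval x Q = 0) :
    ringKrullDim R ≤ (n : WithBot (WithTop ℕ)) := by
  classical
  rw [ringKrullDim, Order.krullDim]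
  apply iSup_le
  intro p
  have hlen : p.length ≤ n := by
    by_contra hlt
    push_neg at hlt
    have hlt' : n + 1 ≤ p.length := hlt
    set q : Fin (n+2) → Ideal R := fun i => (p.toFun ⟨i.val, by omega⟩).asIdeal with hqdef
    have hq : ∀ i, (q i).IsPrime := fun i => (p.toFun _).isPrime
    have hmono : StrictMono q := by
      intro i j hij
      exact p.strictMono (show (⟨i.val, by omega⟩ : Fin (p.length + 1)) < ⟨j.val, by omega⟩
        from hij)
    have hex : ∀ i : Fin (n+1), ∃ y, y ∈ q i.succ ∧ y ∉ q i.castSucc := by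
      intro i
      have : q i.castSucc < q i.succ := hmono (i.castSucc_lt_succ)
      exact SetLike.exists_of_lt this
    choose x hx1 hx2 using hex
    obtain ⟨Q, hQ0, hQ⟩ := h x
    obtain ⟨k, a, hka⟩ := exists_singular x Q hQ0 hQ
    exact chain_blocking q hq hmono x hx1 hx2 k a hka
  exact (Nat.cast_le (α := WithBot ℕ∞)).mpr hlen

lemma length_le_of_le_head (I : Ideal R) (p : LTSeries (PrimeSpectrum R))
    (hp : I ≤ p.head.asIdeal) :
    (p.length : WithBot (WithTop ℕ)) ≤ ringKrullDim (R ⧸ I) := by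
  have hle : ∀ i, I ≤ (p.toFun i).asIdeal := by
    intro i
    exact le_trans hp (p.monotone (Fin.zero_le i))
  have hprime : ∀ i, ((p.toFun i).asIdeal.map (Ideal.Quotient.mk I)).IsPrime := by
    intro i
    exact Ideal.map_isPrime_of_surjective Ideal.Quotient.mk_surjective
      (by rw [Ideal.mk_ker]; exact hle i)
  have hcomap : ∀ i, (((p.toFun i).asIdeal.map (Ideal.Quotient.mk I)).comap
      (Ideal.Quotient.mk I)) = (p.toFun i).asIdeal := by
    intro i
    rw [Ideal.comap_map_of_surjective _ Ideal.Quotient.mk_surjective]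
    rw [← RingHom.ker_eq_comap_bot, Ideal.mk_ker]
    exact sup_eq_left.mpr (hle i)
  set q : LTSeries (PrimeSpectrum (R ⧸ I)) :=
    { length := p.length
      toFun := fun i => ⟨(p.toFun i).asIdeal.map (Ideal.Quotient.mk I), hprime i⟩
      step := by
        intro i
        have hlt : p.toFun i.castSucc < p.toFun i.succ := p.step i
        have hlt' : (p.toFun i.castSucc).asIdeal < (p.toFun i.succ).asIdeal := hlt
        constructor
        · exact Ideal.map_mono hlt'.le
        · intro hge
          have heq : (p.toFun i.castSucc).asIdeal.map (Ideal.Quotient.mk I) =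
              (p.toFun i.succ).asIdeal.map (Ideal.Quotient.mk I) :=
            le_antisymm (Ideal.map_mono hlt'.le) hge
          have := congrArg (Ideal.comap (Ideal.Quotient.mk I)) heq
          rw [hcomap, hcomap] at this
          exact hlt'.ne this } with hq
  rw [ringKrullDim, Order.krullDim]
  exact le_iSup (fun r : LTSeries (PrimeSpectrum (R ⧸ I)) =>
    ((r.length : ℕ) : WithBot (WithTop ℕ))) q

lemma ringKrullDim_quotient_finset_inf_le {ι : Type} (s : Finset ι) (hs : s.Nonempty)
    (I : ι → Ideal R) (n : ℕ)
    (h : ∀ t ∈ s, ringKrullDim (R ⧸ I t) ≤ (n : WithBot (WithTop ℕ))) :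
    ringKrullDim (R ⧸ s.inf I) ≤ (n : WithBot (WithTop ℕ)) := by
  classical
  rw [ringKrullDim, Order.krullDim]
  apply iSup_le
  intro p
  have hfmono : Monotone (fun z => PrimeSpectrum.comap (Ideal.Quotient.mk (s.inf I)) z) := by
    intro a b hab
    exact Ideal.comap_mono hab
  have hfinj : Function.Injective
      (fun z => PrimeSpectrum.comap (Ideal.Quotient.mk (s.inf I)) z) :=
    PrimeSpectrum.comap_injective_of_surjective _ Ideal.Quotient.mk_surjective
  have hfsm : StrictMono (fun z => PrimeSpectrum.comap (Ideal.Quotient.mk (s.inf I)) z) :=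
    hfmono.strictMono_of_injective hfinj
  have hhead : s.inf I ≤ (p.map _ hfsm).head.asIdeal := by
    have heq : (p.map _ hfsm).head =
        PrimeSpectrum.comap (Ideal.Quotient.mk (s.inf I)) p.head := rfl
    rw [heq]
    have h1 : RingHom.ker (Ideal.Quotient.mk (s.inf I)) ≤
        Ideal.comap (Ideal.Quotient.mk (s.inf I)) (p.head.asIdeal) := Ideal.ker_le_comap _
    rwa [Ideal.mk_ker] at h1
  obtain ⟨t, hts, ht⟩ := (((p.map _ hfsm).head.isPrime).inf_le').mp hhead
  have hlen : ((p.map _ hfsm).length : WithBot (WithTop ℕ)) ≤ ringKrullDim (R ⧸ I t) :=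
    length_le_of_le_head (I t) (p.map _ hfsm) ht
  have hll : (p.map _ hfsm).length = p.length := rfl
  rw [hll] at hlen
  exact le_trans hlen (h t hts)

end Dim

section Count
variable {σ : Type} [Fintype σ]

lemma finrank_restrictDegree (t : ℕ) :
    Module.finrank ℂ (MvPolynomial.restrictDegree σ ℂ t) =
      (t + 1) ^ Fintype.card σ := by
  classical
  let e : {s : σ →₀ ℕ // ∀ i, s i ≤ t} ≃ (σ → Fin (t+1)) :=
    { toFun := fun s i => ⟨s.1 i, Nat.lt_succ_of_le (s.2 i)⟩
      invFun := fun f => ⟨Finsupp.equivFunOnFinite.symm (fun i => (f i : ℕ)), fun i => by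
        simp only [Finsupp.coe_equivFunOnFinite_symm]
        exact Nat.lt_succ_iff.mp (f i).2⟩
      left_inv := fun s => by
        ext i
        simp [Finsupp.equivFunOnFinite]
      right_inv := fun f => by
        ext i
        simp [Finsupp.equivFunOnFinite] }
  haveI : Fintype ↥{s : σ →₀ ℕ | ∀ i, s i ≤ t} := Fintype.ofEquiv _ e.symm
  rw [MvPolynomial.restrictDegree, Module.finrank_eq_card_basis
    (MvPolynomial.basisRestrictSupport ℂ {s : σ →₀ ℕ | ∀ i, s i ≤ t})]
  rw [show Fintype.card ↥{s : σ →₀ ℕ | ∀ i, s i ≤ t} = Fintype.card (σ → Fin (t+1)) from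
    Fintype.card_congr e]
  rw [Fintype.card_fun]
  simp

lemma aeval_mem_restrictDegree {n : ℕ} (x : Fin (n+1) → MvPolynomial σ ℂ)
    (D : ℕ) (hD : ∀ i, (x i).totalDegree ≤ D) (t : ℕ)
    (Q : MvPolynomial (Fin (n+1)) ℂ) (hQ : Q ∈ MvPolynomial.restrictDegree (Fin (n+1)) ℂ t) :
    MvPolynomial.aeval x Q ∈ MvPolynomial.restrictDegree σ ℂ (t * (n+1) * D) := by
  classical
  have htd : (MvPolynomial.aeval x Q).totalDegree ≤ t * (n+1) * D := by
    conv_lhs => rw [MvPolynomial.as_sum Q]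
    rw [map_sum]
    apply MvPolynomial.totalDegree_finsetSum_le
    intro v hv
    rw [MvPolynomial.aeval_monomial]
    apply le_trans (MvPolynomial.totalDegree_mul _ _)
    rw [MvPolynomial.algebraMap_eq, MvPolynomial.totalDegree_C, zero_add]
    rw [Finsupp.prod]
    refine le_trans (MvPolynomial.totalDegree_finset_prod _ _) ?_
    calc ∑ i ∈ v.support, ((x i) ^ (v i)).totalDegree
        ≤ ∑ _i ∈ v.support, t * D := by
          apply Finset.sum_le_sum
          intro i _
          refine le_trans (MvPolynomial.totalDegree_pow _ _) ?_
          exact Nat.mul_le_mul ((MvPolynomial.mem_restrictDegree _ _ _).mp hQ v hv i) (hD i)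
      _ = v.support.card * (t * D) := by rw [Finset.sum_const, smul_eq_mul]
      _ ≤ (n + 1) * (t * D) := by
          apply Nat.mul_le_mul_right
          simpa using Finset.card_le_univ v.support
      _ = t * (n + 1) * D := by ring
  rw [MvPolynomial.mem_restrictDegree]
  intro s hs i
  calc s i ≤ s.sum fun _ e => e := by
        by_cases h : s i = 0
        · simp [h]
        · exact Finset.single_le_sum (f := fun j => s j) (fun _ _ => Nat.zero_le _)
            (Finsupp.mem_support_iff.mpr h)
    _ ≤ (MvPolynomial.aeval x Q).totalDegree := MvPolynomial.le_totalDegree hs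
    _ ≤ t * (n+1) * D := htd

lemma exists_annihilator (n : ℕ) (hcard : Fintype.card σ ≤ n)
    (x : Fin (n+1) → MvPolynomial σ ℂ) :
    ∃ Q : MvPolynomial (Fin (n+1)) ℂ, Q ≠ 0 ∧ MvPolynomial.aeval x Q = 0 := by
  classical
  by_contra hcon
  push_neg at hcon
  set D := (Finset.univ.sup fun i => (x i).totalDegree) + 1 with hDdef
  have hD : ∀ i, (x i).totalDegree ≤ D := by
    intro i
    have h' : (x i).totalDegree ≤ Finset.univ.sup fun j => (x j).totalDegree :=
      Finset.le_sup (f := fun j => (x j).totalDegree) (Finset.mem_univ i)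
    omega
  have hD1 : 1 ≤ D := Nat.succ_le_succ (Nat.zero_le _)
  set c := (n + 1) * D with hcdef
  have hc1 : 1 ≤ c := Nat.one_le_iff_ne_zero.mpr (by positivity)
  set t := 2 ^ n * c ^ n with htdef
  have ht1 : 1 ≤ t := Nat.one_le_iff_ne_zero.mpr (by positivity)
  set M := t * (n+1) * D with hMdef
  have hMc : M = c * t := by rw [hMdef, hcdef]; ring
  -- the restricted linear map
  have hmaps : ∀ Q ∈ MvPolynomial.restrictDegree (Fin (n+1)) ℂ t,
      (MvPolynomial.aeval x).toLinearMap Q ∈ MvPolynomial.restrictDegree σ ℂ M :=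
    fun Q hQ => aeval_mem_restrictDegree x D hD t Q hQ
  set φ := ((MvPolynomial.aeval (R := ℂ) x).toLinearMap).restrict hmaps with hφ
  have hinj : Function.Injective φ := by
    intro a b hab
    apply Subtype.ext
    by_contra hne
    have h1 : a.1 - b.1 ≠ 0 := sub_ne_zero.mpr hne
    have h2 : MvPolynomial.aeval x (a.1 - b.1) = 0 := by
      rw [map_sub, sub_eq_zero]
      have := congrArg (Subtype.val) hab
      exact this
    exact hcon _ h1 h2
  have hfr := LinearMap.finrank_le_finrank_of_injective hinj
  rw [finrank_restrictDegree, finrank_restrictDegree] at hfr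
  rw [Fintype.card_fin] at hfr
  -- numeric contradiction
  have hb1 : (M + 1) ^ Fintype.card σ ≤ (M + 1) ^ n :=
    Nat.pow_le_pow_right (Nat.succ_le_succ (Nat.zero_le _)) hcard
  have hb2 : (M + 1) ^ n ≤ (2 * c * t) ^ n := by
    apply Nat.pow_le_pow_left
    rw [hMc]
    have h1 : 1 ≤ c * t := Nat.one_le_iff_ne_zero.mpr (by positivity)
    have h2 : 2 * c * t = c * t + c * t := by ring
    omega
  have hb3 : (2 * c * t) ^ n = t ^ (n + 1) := by
    rw [htdef]
    rw [mul_pow, mul_pow]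
    rw [pow_succ]
    ring
  have hb4 : t ^ (n+1) < (t + 1) ^ (n + 1) :=
    Nat.pow_lt_pow_left (Nat.lt_succ_self t) (Nat.succ_ne_zero n)
  exact absurd (hfr.trans (hb1.trans (hb2.trans_eq hb3))) (not_le.mpr hb4)

end Count

noncomputable section Geo
lemma mem_vanishingIdeal' {σ : Type} {S : Set (σ → ℂ)} {p : MvPolynomial σ ℂ} :
    p ∈ vanishingIdeal' S ↔ ∀ x ∈ S, MvPolynomial.eval x p = 0 := Iff.rfl


lemma ringKrullDim_mvPolynomial_le {σ : Type} [Fintype σ] :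
    ringKrullDim (MvPolynomial σ ℂ) ≤ (Fintype.card σ : WithBot (WithTop ℕ)) :=
  ringKrullDim_le_of_annihilated _ (fun x => exists_annihilator _ le_rfl x)

section Geom
variable {τ : Type} [Fintype τ] [DecidableEq τ]

/-- substitution along a matrix -/
def subMat (M : Matrix τ τ ℂ) : MvPolynomial τ ℂ →ₐ[ℂ] MvPolynomial τ ℂ :=
  MvPolynomial.aeval (fun s => ∑ i, MvPolynomial.C (M s i) * MvPolynomial.X i)

lemma aeval_eq_eval (x : τ → ℂ) (p : MvPolynomial τ ℂ) :
    MvPolynomial.aeval x p = MvPolynomial.eval x p := by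
  rw [MvPolynomial.aeval_def, MvPolynomial.eval, Algebra.algebraMap_self]
  rfl

lemma eval_subMat (M : Matrix τ τ ℂ) (x : τ → ℂ) (p : MvPolynomial τ ℂ) :
    MvPolynomial.eval x (subMat M p) = MvPolynomial.eval (M.mulVec x) p := by
  have h : (MvPolynomial.aeval (R := ℂ) x).comp (subMat M) =
      MvPolynomial.aeval (M.mulVec x) := by
    apply MvPolynomial.algHom_ext
    intro s
    simp [subMat, Matrix.mulVec, dotProduct, mul_comm]
  have h2 : (MvPolynomial.aeval (R := ℂ) x) (subMat M p) =
      MvPolynomial.aeval (M.mulVec x) p := by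
    rw [← AlgHom.comp_apply, h]
  rw [← aeval_eq_eval, ← aeval_eq_eval]
  exact h2

lemma subMat_comp (M N : Matrix τ τ ℂ) :
    (subMat M).comp (subMat N) = subMat (N * M) := by
  apply MvPolynomial.algHom_ext
  intro s
  simp only [AlgHom.comp_apply, subMat, MvPolynomial.aeval_X, map_sum, map_mul,
    MvPolynomial.aeval_C, MvPolynomial.algebraMap_eq]
  simp only [Finset.mul_sum]
  rw [Finset.sum_comm]
  apply Finset.sum_congr rfl
  intro j _
  rw [Matrix.mul_apply, map_sum, Finset.sum_mul]
  apply Finset.sum_congr rfl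
  intro i _
  rw [map_mul]
  ring

lemma subMat_one : subMat (1 : Matrix τ τ ℂ) = AlgHom.id ℂ _ := by
  apply MvPolynomial.algHom_ext
  intro s
  simp [subMat, Matrix.one_apply]

/-- the algebra automorphism from an invertible matrix -/
def subMatEquiv (M : Matrix τ τ ℂ) (hM : IsUnit M.det) :
    MvPolynomial τ ℂ ≃ₐ[ℂ] MvPolynomial τ ℂ :=
  AlgEquiv.ofAlgHom (subMat M) (subMat M⁻¹)
    (by rw [subMat_comp, Matrix.nonsing_inv_mul M hM, subMat_one])
    (by rw [subMat_comp, Matrix.mul_nonsing_inv M hM, subMat_one])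

end Geom

section Geom2
variable {τ : Type} [Fintype τ] [DecidableEq τ]

lemma map_subMatEquiv (M : Matrix τ τ ℂ) (hM : IsUnit M.det) (W : Set (τ → ℂ)) :
    Ideal.map ((subMatEquiv M hM : MvPolynomial τ ℂ ≃ₐ[ℂ] MvPolynomial τ ℂ) :
        MvPolynomial τ ℂ →+* MvPolynomial τ ℂ) (vanishingIdeal' W) =
      vanishingIdeal' {x | M.mulVec x ∈ W} := by
  ext q
  rw [show ((subMatEquiv M hM : MvPolynomial τ ℂ ≃ₐ[ℂ] MvPolynomial τ ℂ) :
      MvPolynomial τ ℂ →+* MvPolynomial τ ℂ) =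
      ((subMatEquiv M hM).toRingEquiv : MvPolynomial τ ℂ →+* MvPolynomial τ ℂ) from rfl]
  rw [Ideal.map_comap_of_equiv, Ideal.mem_comap]
  have hsymm : ∀ r, (subMatEquiv M hM).toRingEquiv.symm r = subMat M⁻¹ r := fun r => rfl
  rw [hsymm]
  constructor
  · intro h x hx
    have h1 := h (M.mulVec x) hx
    rw [eval_subMat] at h1
    rwa [Matrix.mulVec_mulVec, Matrix.nonsing_inv_mul M hM, Matrix.one_mulVec] at h1
  · intro h y hy
    show MvPolynomial.eval y (subMat M⁻¹ q) = 0
    rw [eval_subMat]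
    apply h
    show M.mulVec (M⁻¹.mulVec y) ∈ W
    rwa [Matrix.mulVec_mulVec, Matrix.mul_nonsing_inv M hM, Matrix.one_mulVec]

variable (J : Set τ) [DecidablePred (· ∈ J)]

def killJ : MvPolynomial τ ℂ →ₐ[ℂ] MvPolynomial {s : τ // s ∉ J} ℂ :=
  MvPolynomial.aeval (fun s => if h : s ∈ J then 0 else MvPolynomial.X ⟨s, h⟩)

def extJ (z : {s : τ // s ∉ J} → ℂ) : τ → ℂ := fun s => if h : s ∈ J then 0 else z ⟨s, h⟩

lemma eval_killJ (z : {s : τ // s ∉ J} → ℂ) (p : MvPolynomial τ ℂ) :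
    MvPolynomial.eval z (killJ J p) = MvPolynomial.eval (extJ J z) p := by
  have h : (MvPolynomial.aeval (R := ℂ) z).comp (killJ J) =
      MvPolynomial.aeval (extJ J z) := by
    apply MvPolynomial.algHom_ext
    intro s
    simp only [AlgHom.comp_apply, killJ, MvPolynomial.aeval_X]
    rw [apply_dite (MvPolynomial.aeval (R := ℂ) z)]
    simp [extJ]
  have h2 : (MvPolynomial.aeval (R := ℂ) z) (killJ J p) =
      MvPolynomial.aeval (extJ J z) p := by
    rw [← AlgHom.comp_apply, h]
  rw [← aeval_eq_eval, ← aeval_eq_eval]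
  exact h2

lemma killJ_surjective : Function.Surjective (killJ (τ := τ) J) := by
  intro q
  refine ⟨MvPolynomial.rename Subtype.val q, ?_⟩
  show (MvPolynomial.aeval _) (MvPolynomial.rename Subtype.val q) = q
  rw [MvPolynomial.aeval_rename]
  have : (fun s : τ => if h : s ∈ J then 0 else MvPolynomial.X (R := ℂ) ⟨s, h⟩) ∘
      (Subtype.val : {s : τ // s ∉ J} → τ) = MvPolynomial.X := by
    funext s'
    simp only [Function.comp_apply]
    rw [dif_neg s'.2]
  rw [this]
  simp [MvPolynomial.aeval_X_left]

lemma ker_killJ : RingHom.ker (killJ (τ := τ) J) =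
    vanishingIdeal' {x : τ → ℂ | ∀ s ∈ J, x s = 0} := by
  ext p
  rw [RingHom.mem_ker, mem_vanishingIdeal']
  constructor
  · intro h x hx
    have hx' : x = extJ J (fun s' => x s'.1) := by
      funext s
      rw [extJ]
      by_cases hs : s ∈ J
      · rw [dif_pos hs]
        exact hx s hs
      · rw [dif_neg hs]
    rw [hx', ← eval_killJ, h]
    simp
  · intro h
    apply MvPolynomial.funext
    intro z
    rw [eval_killJ, map_zero]
    apply h
    intro s hs
    rw [extJ, dif_pos hs]

lemma dim_linear_subspace (M : Matrix τ τ ℂ) (hM : IsUnit M.det) :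
    ringKrullDim (MvPolynomial τ ℂ ⧸
        vanishingIdeal' {x : τ → ℂ | ∀ s ∈ J, M.mulVec x s = 0}) ≤
      (Fintype.card {s : τ // s ∉ J} : WithBot (WithTop ℕ)) := by
  have hVW : {x : τ → ℂ | ∀ s ∈ J, M.mulVec x s = 0} =
      {x : τ → ℂ | M.mulVec x ∈ {y : τ → ℂ | ∀ s ∈ J, y s = 0}} := rfl
  rw [hVW]
  have e1 : (MvPolynomial τ ℂ ⧸ vanishingIdeal' {y : τ → ℂ | ∀ s ∈ J, y s = 0}) ≃ₐ[ℂ]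
      (MvPolynomial τ ℂ ⧸ vanishingIdeal' {x : τ → ℂ | M.mulVec x ∈
        {y : τ → ℂ | ∀ s ∈ J, y s = 0}}) :=
    Ideal.quotientEquivAlg _ _ (subMatEquiv M hM) (map_subMatEquiv M hM _).symm
  have e2 : (MvPolynomial τ ℂ ⧸ vanishingIdeal' {y : τ → ℂ | ∀ s ∈ J, y s = 0}) ≃ₐ[ℂ]
      MvPolynomial {s : τ // s ∉ J} ℂ := by
    refine AlgEquiv.trans (Ideal.quotientEquivAlgOfEq ℂ (ker_killJ J).symm) ?_
    exact Ideal.quotientKerAlgEquivOfSurjective (killJ_surjective J)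
  calc ringKrullDim (MvPolynomial τ ℂ ⧸ vanishingIdeal' {x : τ → ℂ | M.mulVec x ∈
        {y : τ → ℂ | ∀ s ∈ J, y s = 0}})
      = ringKrullDim (MvPolynomial τ ℂ ⧸ vanishingIdeal' {y : τ → ℂ | ∀ s ∈ J, y s = 0}) :=
        (ringKrullDim_eq_of_ringEquiv e1.toRingEquiv).symm
    _ = ringKrullDim (MvPolynomial {s : τ // s ∉ J} ℂ) :=
        ringKrullDim_eq_of_ringEquiv e2.toRingEquiv
    _ ≤ (Fintype.card {s : τ // s ∉ J} : WithBot ℕ∞) := ringKrullDim_mvPolynomial_le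

end Geom2
end Geo

section Key
variable {m : ℕ}

lemma key_dim (T : Fin m → Fin m → Fin m → ℂ) (hT : Concise T)
    (u v w : Fin m → Fin m → ℂ)
    (hdec : T = fun i j k => ∑ s, u s i * v s j * w s k) :
    ringKrullDim (MvPolynomial (Fin m ⊕ Fin m) ℂ ⧸ vanishingIdeal' (hatSigmaAB T)) ≤
      (m : WithBot (WithTop ℕ)) := by
  classical
  obtain ⟨injA, injB, injC⟩ := hT
  set U : Matrix (Fin m) (Fin m) ℂ := Matrix.of (fun s i => u s i) with hUdef
  set V : Matrix (Fin m) (Fin m) ℂ := Matrix.of (fun s j => v s j) with hVdef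
  set W : Matrix (Fin m) (Fin m) ℂ := Matrix.of (fun s k => w s k) with hWdef
  -- slices at zero
  have hA0 : ∀ α, sliceA T α = 0 → α = 0 := by
    intro α h
    have h0 : sliceA T (0 : Fin m → ℂ) = 0 := by
      ext j k
      simp [sliceA]
    exact injA (h.trans h0.symm)
  have hB0 : ∀ β, sliceB T β = 0 → β = 0 := by
    intro β h
    have h0 : sliceB T (0 : Fin m → ℂ) = 0 := by
      ext i k
      simp [sliceB]
    exact injB (h.trans h0.symm)
  have hC0 : ∀ γ, sliceC T γ = 0 → γ = 0 := by
    intro γ h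
    have h0 : sliceC T (0 : Fin m → ℂ) = 0 := by
      ext i j
      simp [sliceC]
    exact injC (h.trans h0.symm)
  -- U is invertible
  have hUinj : Function.Injective U.mulVec := by
    have hker : ∀ α, U.mulVec α = 0 → α = 0 := by
      intro α h
      apply hA0
      ext j k
      show (∑ i, T i j k * α i) = 0
      have hcalc : (∑ i, T i j k * α i) = ∑ s, (U.mulVec α s) * (v s j * w s k) := by
        rw [hdec]
        simp only [Finset.sum_mul]
        rw [Finset.sum_comm]
        apply Finset.sum_congr rfl
        intro s _
        rw [show U.mulVec α s = ∑ i, u s i * α i from by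
          simp [Matrix.mulVec, dotProduct, hUdef]]
        rw [Finset.sum_mul]
        apply Finset.sum_congr rfl
        intro i _
        ring
      rw [hcalc, h]
      simp
    intro a b hab
    have : U.mulVec (a - b) = 0 := by
      rw [Matrix.mulVec_sub, hab, sub_self]
    have := hker _ this
    exact sub_eq_zero.mp this
  have hVinj : Function.Injective V.mulVec := by
    have hker : ∀ β, V.mulVec β = 0 → β = 0 := by
      intro β h
      apply hB0
      ext i k
      show (∑ j, T i j k * β j) = 0
      have hcalc : (∑ j, T i j k * β j) = ∑ s, (V.mulVec β s) * (u s i * w s k) := by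
        rw [hdec]
        simp only [Finset.sum_mul]
        rw [Finset.sum_comm]
        apply Finset.sum_congr rfl
        intro s _
        rw [show V.mulVec β s = ∑ j, v s j * β j from by
          simp [Matrix.mulVec, dotProduct, hVdef]]
        rw [Finset.sum_mul]
        apply Finset.sum_congr rfl
        intro j _
        ring
      rw [hcalc, h]
      simp
    intro a b hab
    have : V.mulVec (a - b) = 0 := by
      rw [Matrix.mulVec_sub, hab, sub_self]
    exact sub_eq_zero.mp (hker _ this)
  have hWinj : Function.Injective W.mulVec := by
    have hker : ∀ γ, W.mulVec γ = 0 → γ = 0 := by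
      intro γ h
      apply hC0
      ext i j
      show (∑ k, T i j k * γ k) = 0
      have hcalc : (∑ k, T i j k * γ k) = ∑ s, (W.mulVec γ s) * (u s i * v s j) := by
        rw [hdec]
        simp only [Finset.sum_mul]
        rw [Finset.sum_comm]
        apply Finset.sum_congr rfl
        intro s _
        rw [show W.mulVec γ s = ∑ k, w s k * γ k from by
          simp [Matrix.mulVec, dotProduct, hWdef]]
        rw [Finset.sum_mul]
        apply Finset.sum_congr rfl
        intro k _
        ring
      rw [hcalc, h]
      simp
    intro a b hab
    have : W.mulVec (a - b) = 0 := by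
      rw [Matrix.mulVec_sub, hab, sub_self]
    exact sub_eq_zero.mp (hker _ this)
  have hUunit : IsUnit U := Matrix.mulVec_injective_iff_isUnit.mp hUinj
  have hVunit : IsUnit V := Matrix.mulVec_injective_iff_isUnit.mp hVinj
  have hWunit : IsUnit W := Matrix.mulVec_injective_iff_isUnit.mp hWinj
  have hWvec : Function.Injective W.vecMul := Matrix.vecMul_injective_iff_isUnit.mpr hWunit
  -- the block matrix
  set G : Matrix (Fin m ⊕ Fin m) (Fin m ⊕ Fin m) ℂ := Matrix.fromBlocks U 0 0 V with hGdef
  have hGdet : IsUnit G.det := by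
    rw [hGdef, Matrix.det_fromBlocks_zero₂₁]
    exact ((Matrix.isUnit_iff_isUnit_det U).mp hUunit).mul
      ((Matrix.isUnit_iff_isUnit_det V).mp hVunit)
  have hGl : ∀ (x : Fin m ⊕ Fin m → ℂ) (s : Fin m),
      G.mulVec x (Sum.inl s) = ∑ i, u s i * x (Sum.inl i) := by
    intro x s
    simp [hGdef, Matrix.mulVec, dotProduct, Fintype.sum_sum_type, hUdef]
  have hGr : ∀ (x : Fin m ⊕ Fin m → ℂ) (s : Fin m),
      G.mulVec x (Sum.inr s) = ∑ j, v s j * x (Sum.inr j) := by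
    intro x s
    simp [hGdef, Matrix.mulVec, dotProduct, Fintype.sum_sum_type, hVdef]
  -- main computation
  have hcalc : ∀ (x : Fin m ⊕ Fin m → ℂ) (k : Fin m),
      (∑ i, ∑ j, T i j k * x (Sum.inl i) * x (Sum.inr j)) =
        ∑ s, (G.mulVec x (Sum.inl s) * G.mulVec x (Sum.inr s)) * w s k := by
    intro x k
    rw [hdec]
    simp only [Finset.sum_mul]
    have : ∀ i, ∑ j, ∑ s, u s i * v s j * w s k * x (Sum.inl i) * x (Sum.inr j) =
        ∑ s, ∑ j, u s i * v s j * w s k * x (Sum.inl i) * x (Sum.inr j) := by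
      intro i; exact Finset.sum_comm
    rw [Finset.sum_congr rfl (fun i _ => this i)]
    rw [Finset.sum_comm]
    apply Finset.sum_congr rfl
    intro s _
    rw [hGl, hGr, Finset.sum_mul, Finset.sum_mul]
    apply Finset.sum_congr rfl
    intro i _
    rw [Finset.mul_sum, Finset.sum_mul]
    apply Finset.sum_congr rfl
    intro j _
    ring
  -- the decomposition of the variety
  have hprod : ∀ x : Fin m ⊕ Fin m → ℂ, x ∈ hatSigmaAB T ↔
      ∀ s, G.mulVec x (Sum.inl s) * G.mulVec x (Sum.inr s) = 0 := by
    intro x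
    constructor
    · intro hx
      have hvm : W.vecMul (fun s => G.mulVec x (Sum.inl s) * G.mulVec x (Sum.inr s)) =
          W.vecMul 0 := by
        rw [Matrix.zero_vecMul]
        funext k
        rw [Matrix.vecMul]
        show (∑ s, (fun s => G.mulVec x (Sum.inl s) * G.mulVec x (Sum.inr s)) s * W s k) = 0
        rw [show (∑ s, (fun s => G.mulVec x (Sum.inl s) * G.mulVec x (Sum.inr s)) s * W s k)
          = ∑ s, (G.mulVec x (Sum.inl s) * G.mulVec x (Sum.inr s)) * w s k from rfl]
        rw [← hcalc x k]
        exact hx k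
      have := hWvec hvm
      intro s
      exact congrFun this s
    · intro hx k
      rw [hcalc x k]
      apply Finset.sum_eq_zero
      intro s _
      rw [hx s, zero_mul]
  have hSig : hatSigmaAB T = ⋃ S : Finset (Fin m),
      {x : (Fin m ⊕ Fin m) → ℂ | ∀ c ∈ {c : Fin m ⊕ Fin m |
        Sum.elim (fun i => i ∈ S) (fun j => j ∉ S) c}, G.mulVec x c = 0} := by
    ext x
    rw [Set.mem_iUnion]
    constructor
    · intro hx
      refine ⟨Finset.univ.filter (fun s => G.mulVec x (Sum.inl s) = 0), ?_⟩
      intro c hc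
      rcases c with s | s
      · simp only [Set.mem_setOf_eq, Sum.elim_inl, Finset.mem_filter] at hc
        exact hc.2
      · simp only [Set.mem_setOf_eq, Sum.elim_inr, Finset.mem_filter, Finset.mem_univ,
          true_and, not_forall] at hc
        have hprod_s := (hprod x).mp hx s
        rcases mul_eq_zero.mp hprod_s with h | h
        · exact absurd (by simpa using h) hc
        · exact h
    · rintro ⟨S, hS⟩
      apply (hprod x).mpr
      intro s
      by_cases hs : s ∈ S
      · rw [hS (Sum.inl s) (by simpa using hs), zero_mul]
      · rw [hS (Sum.inr s) (by simpa using hs), mul_zero]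
  -- the ideal as finite inf
  have hIdeal : vanishingIdeal' (hatSigmaAB T) =
      Finset.univ.inf (fun S : Finset (Fin m) =>
        vanishingIdeal' {x : (Fin m ⊕ Fin m) → ℂ | ∀ c ∈ {c : Fin m ⊕ Fin m |
          Sum.elim (fun i => i ∈ S) (fun j => j ∉ S) c}, G.mulVec x c = 0}) := by
    ext p
    rw [Submodule.mem_finsetInf]
    rw [mem_vanishingIdeal', hSig]
    constructor
    · intro h S _
      intro x hx
      exact h x (Set.mem_iUnion.mpr ⟨S, hx⟩)
    · intro h x hx
      obtain ⟨S, hS⟩ := Set.mem_iUnion.mp hx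
      exact h S (Finset.mem_univ S) x hS
  rw [hIdeal]
  apply ringKrullDim_quotient_finset_inf_le _ ⟨∅, Finset.mem_univ ∅⟩ _ m
  intro S _
  have hd := dim_linear_subspace {c : Fin m ⊕ Fin m |
      Sum.elim (fun i => i ∈ S) (fun j => j ∉ S) c} G hGdet
  have hcard : Fintype.card {c : Fin m ⊕ Fin m // c ∉ {c : Fin m ⊕ Fin m |
      Sum.elim (fun i => i ∈ S) (fun j => j ∉ S) c}} = m := by
    have he : {c : Fin m ⊕ Fin m // c ∉ {c : Fin m ⊕ Fin m |
        Sum.elim (fun i => i ∈ S) (fun j => j ∉ S) c}} ≃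
        {i : Fin m // ¬ i ∈ S} ⊕ {j : Fin m // ¬ j ∉ S} := Equiv.subtypeSum
    rw [Fintype.card_congr he, Fintype.card_sum]
    have h1 : Fintype.card {i : Fin m // ¬ i ∈ S} = m - S.card := by
      rw [Fintype.card_subtype_compl]
      congr 1
      · exact Fintype.card_fin m
      · simpa using Fintype.card_coe S
    have h2 : Fintype.card {j : Fin m // ¬ j ∉ S} = S.card := by
      rw [Fintype.card_subtype]
      rw [show Finset.univ.filter (fun j : Fin m => ¬ j ∉ S) = S from by
        ext j; simp]
    have h3 : S.card ≤ m := by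
      have := Finset.card_le_univ S
      simpa using this
    omega
  rw [hcard] at hd
  exact hd

end Key

noncomputable section Rank
lemma rank_set_mem {m : ℕ} (T : Fin m → Fin m → Fin m → ℂ) :
    (m * m) ∈ {r : ℕ | ∃ (u : Fin r → Fin m → ℂ) (v : Fin r → Fin m → ℂ)
      (w : Fin r → Fin m → ℂ), T = fun i j k => ∑ s : Fin r, u s i * v s j * w s k} := by
  classical
  refine ⟨fun s i => if i = (finProdFinEquiv.symm s).1 then 1 else 0,
    fun s j => if j = (finProdFinEquiv.symm s).2 then 1 else 0,
    fun s k => T (finProdFinEquiv.symm s).1 (finProdFinEquiv.symm s).2 k, ?_⟩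
  funext i j k
  rw [show (∑ s : Fin (m * m),
      (if i = (finProdFinEquiv.symm s).1 then (1:ℂ) else 0) *
        (if j = (finProdFinEquiv.symm s).2 then (1:ℂ) else 0) *
        T (finProdFinEquiv.symm s).1 (finProdFinEquiv.symm s).2 k) =
      ∑ p : Fin m × Fin m, (if i = p.1 then (1:ℂ) else 0) *
        (if j = p.2 then (1:ℂ) else 0) * T p.1 p.2 k from
    Equiv.sum_comp finProdFinEquiv.symm (fun p : Fin m × Fin m =>
      (if i = p.1 then (1:ℂ) else 0) * (if j = p.2 then (1:ℂ) else 0) * T p.1 p.2 k)]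
  rw [Fintype.sum_prod_type]
  simp [ite_mul, Finset.sum_ite_eq]

lemma le_of_decomp {m r : ℕ} (T : Fin m → Fin m → Fin m → ℂ)
    (injC : Function.Injective (sliceC T))
    (u v w : Fin r → Fin m → ℂ)
    (hdec : T = fun i j k => ∑ s : Fin r, u s i * v s j * w s k) :
    m ≤ r := by
  classical
  set f : Fin r → Matrix (Fin m) (Fin m) ℂ := fun s => Matrix.of (fun i j => u s i * v s j)
    with hfdef
  set sp := Submodule.span ℂ (Set.range f) with hspdef
  have hmem : ∀ γ : Fin m → ℂ, sliceC T γ ∈ sp := by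
    intro γ
    have heq : sliceC T γ = ∑ s, (∑ k, w s k * γ k) • f s := by
      ext i j
      rw [show (∑ s, (∑ k, w s k * γ k) • f s) i j =
          ∑ s, (∑ k, w s k * γ k) * (u s i * v s j) from by
        rw [Matrix.sum_apply]
        apply Finset.sum_congr rfl
        intro s _
        simp [hfdef]]
      show (∑ k, T i j k * γ k) = _
      rw [hdec]
      simp only [Finset.sum_mul]
      rw [Finset.sum_comm]
      apply Finset.sum_congr rfl
      intro s _
      apply Finset.sum_congr rfl
      intro k _
      ring
    rw [heq]
    exact Submodule.sum_mem _ (fun s _ =>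
      Submodule.smul_mem _ _ (Submodule.subset_span ⟨s, rfl⟩))
  set L : (Fin m → ℂ) →ₗ[ℂ] sp :=
    { toFun := fun γ => ⟨sliceC T γ, hmem γ⟩
      map_add' := by
        intro a b
        apply Subtype.ext
        show sliceC T (a + b) = sliceC T a + sliceC T b
        ext i j
        show (∑ k, T i j k * (a k + b k)) = (∑ k, T i j k * a k) + ∑ k, T i j k * b k
        rw [← Finset.sum_add_distrib]
        apply Finset.sum_congr rfl
        intro k _
        ring
      map_smul' := by
        intro c a
        apply Subtype.ext
        show sliceC T (c • a) = c • sliceC T a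
        ext i j
        show (∑ k, T i j k * (c * a k)) = c * ∑ k, T i j k * a k
        rw [Finset.mul_sum]
        apply Finset.sum_congr rfl
        intro k _
        ring } with hLdef
  have hLinj : Function.Injective L := by
    intro a b hab
    apply injC
    have := congrArg Subtype.val hab
    exact this
  haveI : Module.Finite ℂ sp := FiniteDimensional.span_of_finite ℂ (Set.finite_range f)
  have h1 : Module.finrank ℂ (Fin m → ℂ) ≤ Module.finrank ℂ sp :=
    LinearMap.finrank_le_finrank_of_injective hLinj
  have h2 : Module.finrank ℂ (Fin m → ℂ) = m := by
    simp [Module.finrank_fintype_fun_eq_card]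
  have h3 : Module.finrank ℂ sp ≤ r := by
    haveI : Fintype (Set.range f) := Set.fintypeRange f
    refine le_trans (finrank_span_le_card (R := ℂ) (Set.range f)) ?_
    rw [Set.toFinset_range]
    exact le_trans (Finset.card_image_le) (by simp)
  omega

lemma affineDimNat_le {σ : Type} (S : Set (σ → ℂ)) (n : ℕ)
    (h : affineDim S ≤ (n : WithBot (WithTop ℕ))) : affineDimNat S ≤ n := by
  by_cases hb : affineDim S = ⊥
  · rw [affineDimNat, hb]
    exact Nat.zero_le n
  · obtain ⟨a, ha⟩ := WithBot.ne_bot_iff_exists.mp hb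
    rw [affineDimNat, ← ha]
    rw [← ha] at h
    have h' : a ≤ (n : WithTop ℕ) := by exact_mod_cast h
    cases a with
    | top => exact absurd h' (by simp)
    | coe b =>
      have hb' : b ≤ n := by simpa using h'
      exact hb'

end Rank

lemma affineDimNat_le' {σ : Type} (S : Set (σ → ℂ)) (n : ℕ)
    (h : affineDim S ≤ (n : WithBot (WithTop ℕ))) : affineDimNat S ≤ n := by
  by_cases hb : affineDim S = ⊥
  · rw [affineDimNat, hb]
    exact Nat.zero_le n
  · obtain ⟨a, ha⟩ := WithBot.ne_bot_iff_exists.mp hb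
    rw [affineDimNat, ← ha]
    rw [← ha] at h
    have h' : a ≤ (n : WithTop ℕ) := by exact_mod_cast h
    cases a with
    | top => exact absurd h' (by simp)
    | coe b =>
      have hb' : b ≤ n := by simpa using h'
      exact hb'

end Aux

/-- A concise tensor in `ℂ^m ⊗ ℂ^m ⊗ ℂ^m` with degenerate geometric
rank (`GR(T) < m`) has tensor rank greater than `m`. -/
theorem stmt_7 (m : ℕ) (T : Fin m → Fin m → Fin m → ℂ)
    (hT : Concise T) (hGR : geomRank T < m) :
    m < tensorRank T := by
  classical
  by_contra hnot
  push_neg at hnot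
  have hne : {r : ℕ | ∃ (u : Fin r → Fin m → ℂ) (v : Fin r → Fin m → ℂ)
      (w : Fin r → Fin m → ℂ), T = fun i j k => ∑ s : Fin r, u s i * v s j * w s k}.Nonempty :=
    ⟨m * m, rank_set_mem T⟩
  have hmem : ∃ (u : Fin (tensorRank T) → Fin m → ℂ) (v : Fin (tensorRank T) → Fin m → ℂ)
      (w : Fin (tensorRank T) → Fin m → ℂ),
      T = fun i j k => ∑ s : Fin (tensorRank T), u s i * v s j * w s k :=
    Nat.sInf_mem hne
  obtain ⟨u, v, w, hdec⟩ := hmem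
  have h1 : m ≤ tensorRank T := le_of_decomp T hT.2.2 u v w hdec
  have heq : tensorRank T = m := le_antisymm hnot h1
  have hdec' : T = fun i j k => ∑ s : Fin m,
      u ((finCongr heq.symm) s) i * v ((finCongr heq.symm) s) j * w ((finCongr heq.symm) s) k := by
    funext i j k
    have h0 : T i j k = ∑ s : Fin (tensorRank T), u s i * v s j * w s k :=
      congrFun (congrFun (congrFun hdec i) j) k
    rw [h0]
    exact (Equiv.sum_comp (finCongr heq.symm) (fun s => u s i * v s j * w s k)).symm
  have hkd := key_dim T hT _ _ _ hdec'
  have hdn : affineDimNat (hatSigmaAB T) ≤ m := affineDimNat_le' _ _ hkd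
  have hgr : m ≤ geomRank T := by
    rw [geomRank]
    simp only [Fintype.card_fin]
    omega
  omega
end

section
/- Let b, c, q be positive integers and r ≥ 0, and let M be a b×c matrix whose entries are homogeneous linear forms in ℂ[x_1,…,x_q]. Suppose there exists a nonzero homogeneous polynomial S ∈ ℂ[x_1,…,x_q] of degree r+1 that is not divisible by any polynomial of degree 1, such that every (r+1)×(r+1) minor of M is a scalar multiple of S. Then every matrix in the linear space E = {M(x) : x ∈ ℂ^q} has rank at most r+1, i.e. every (r+2)×(r+2) minor of M is identically zero. -/
open scoped BigOperators

section Aux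

open Module Submodule Matrix

lemma aux_extract {α W : Type*} [Fintype α] [AddCommGroup W] [Module ℂ W]
    (v : α → W) {n : ℕ} (h : n ≤ finrank ℂ (span ℂ (Set.range v))) :
    ∃ f : Fin n → α, Function.Injective f ∧ LinearIndependent ℂ (v ∘ f) := by
  obtain ⟨s, hs_sub, hs_span, hs_ind⟩ := exists_linearIndependent ℂ (Set.range v)
  have hsfin : s.Finite := (Set.finite_range v).subset hs_sub
  haveI := hsfin.fintype
  have hcard : n ≤ Fintype.card s := by
    have h1 : finrank ℂ (span ℂ s) = s.toFinset.card := finrank_span_set_eq_card hs_ind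
    rw [← hs_span] at h
    rw [h1, Set.toFinset_card] at h
    exact h
  obtain ⟨g⟩ : Nonempty (Fin n ↪ s) :=
    Function.Embedding.nonempty_of_card_le (by simpa using hcard)
  have hmem : ∀ k : Fin n, (g k : W) ∈ Set.range v := fun k => hs_sub (g k).2
  choose f hf using hmem
  refine ⟨f, ?_, ?_⟩
  · intro k k' he
    apply g.injective
    exact Subtype.ext (by rw [← hf k, ← hf k', he])
  · have : v ∘ f = Subtype.val ∘ g := funext fun k => hf k
    rw [this]
    exact hs_ind.comp g g.injective

lemma aux_rank_le {b c n : ℕ} (B : Matrix (Fin b) (Fin c) ℂ)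
    (h : ∀ (rows : Fin (n + 1) → Fin b) (cols : Fin (n + 1) → Fin c),
      Function.Injective rows → Function.Injective cols →
      (B.submatrix rows cols).det = 0) : B.rank ≤ n := by
  by_contra hlt
  push_neg at hlt
  have h1 : n + 1 ≤ finrank ℂ (span ℂ (Set.range Bᵀ)) := by
    change n + 1 ≤ finrank ℂ (span ℂ (Set.range B.col))
    rw [← Matrix.rank_eq_finrank_span_cols]; omega
  obtain ⟨cols, hcinj, hcind⟩ := aux_extract Bᵀ h1
  set B1 : Matrix (Fin b) (Fin (n + 1)) ℂ := B.submatrix id cols with hB1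
  have hB1T : B1ᵀ = Bᵀ ∘ cols := by
    ext k i; simp [hB1, Matrix.transpose_apply]; rfl
  have hrB1 : B1.rank = n + 1 := by
    rw [Matrix.rank_eq_finrank_span_cols, Matrix.col, hB1T, finrank_span_eq_card hcind]
    simp
  have h2 : n + 1 ≤ finrank ℂ (span ℂ (Set.range B1)) := by
    have : B1ᵀ.rank = n + 1 := by rw [Matrix.rank_transpose]; exact hrB1
    have h3 := Matrix.rank_eq_finrank_span_cols B1ᵀ
    rw [Matrix.col_transpose, Matrix.row] at h3
    omega
  obtain ⟨rows, hrinj, hrind⟩ := aux_extract (fun i => B1 i) h2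
  have hN : LinearIndependent ℂ (fun k => (B.submatrix rows cols) k) := by
    have : (fun k => (B.submatrix rows cols) k) = (fun i => B1 i) ∘ rows := by
      ext k l; simp [hB1]
    rw [this]; exact hrind
  have hu : IsUnit (B.submatrix rows cols) :=
    Matrix.linearIndependent_rows_iff_isUnit.mp hN
  have hdet : (B.submatrix rows cols).det ≠ 0 :=
    ((Matrix.isUnit_iff_isUnit_det _).mp hu).ne_zero
  exact hdet (h rows cols hrinj hcinj)

end Aux

/-- If all `(r+1) × (r+1)` minors of a `b × c` matrix of linear forms
are scalar multiples of a fixed degree-`(r+1)` polynomial `S` with no linear factor, then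
the matrix has rank at most `r+1` at every point, i.e. all `(r+2) × (r+2)` minors vanish
identically. -/
theorem stmt_9 (b c q : ℕ) (hb : 0 < b) (hc : 0 < c) (hq : 0 < q) (r : ℕ)
    (M : Matrix (Fin b) (Fin c) (MvPolynomial (Fin q) ℂ))
    (hlin : ∀ i j, (M i j).IsHomogeneous 1)
    (S : MvPolynomial (Fin q) ℂ) (hS0 : S ≠ 0) (hShom : S.IsHomogeneous (r + 1))
    (hSnolin : ∀ L : MvPolynomial (Fin q) ℂ, L.totalDegree = 1 → ¬ L ∣ S)
    (hminors : ∀ (rows : Fin (r + 1) → Fin b) (cols : Fin (r + 1) → Fin c),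
      Function.Injective rows → Function.Injective cols →
      ∃ t : ℂ, (M.submatrix rows cols).det = MvPolynomial.C t * S) :
    (∀ x : Fin q → ℂ,
      (Matrix.of fun i j => MvPolynomial.eval x (M i j)).rank ≤ r + 1) ∧
    (∀ (rows : Fin (r + 2) → Fin b) (cols : Fin (r + 2) → Fin c),
      Function.Injective rows → Function.Injective cols →
      (M.submatrix rows cols).det = 0) := by
  have key : ∀ (rows : Fin (r + 2) → Fin b) (cols : Fin (r + 2) → Fin c),
      Function.Injective rows → Function.Injective cols →
      (M.submatrix rows cols).det = 0 := by
    intro rows cols hr hc'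
    set N : Matrix (Fin (r + 2)) (Fin (r + 2)) (MvPolynomial (Fin q) ℂ) :=
      M.submatrix rows cols with hN
    have hminor : ∀ i j : Fin (r + 2), ∃ t : ℂ,
        (N.submatrix (Fin.succAbove j) (Fin.succAbove i)).det = MvPolynomial.C t * S := by
      intro i j
      rw [hN, Matrix.submatrix_submatrix]
      exact hminors _ _ (hr.comp Fin.succAbove_right_injective)
        (hc'.comp Fin.succAbove_right_injective)
    choose t ht using hminor
    set A : Matrix (Fin (r + 2)) (Fin (r + 2)) ℂ :=
      Matrix.of (fun i j => (-1 : ℂ) ^ ((j : ℕ) + (i : ℕ)) * t i j) with hA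
    have hadj : ∀ i j, N.adjugate i j = MvPolynomial.C (A i j) * S := by
      intro i j
      rw [Matrix.adjugate_fin_succ_eq_det_submatrix, ht i j, hA]
      simp only [Matrix.of_apply, map_mul, map_pow, map_neg, map_one]
      ring
    set L : MvPolynomial (Fin q) ℂ :=
      ∑ k, N 0 k * MvPolynomial.C (A k 0) with hL
    have hmuladj := Matrix.mul_adjugate N
    have hdet : N.det = L * S := by
      have h0 := congrFun (congrFun hmuladj 0) 0
      rw [Matrix.mul_apply] at h0
      simp only [hadj] at h0
      rw [Matrix.smul_apply, Matrix.one_apply_eq, smul_eq_mul, mul_one] at h0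
      rw [← h0, hL, Finset.sum_mul]
      apply Finset.sum_congr rfl
      intro k _; ring
    have hid : N * A.map MvPolynomial.C = L • (1 : Matrix _ _ (MvPolynomial (Fin q) ℂ)) := by
      refine Matrix.ext fun i j => ?_
      have h0 := congrFun (congrFun hmuladj i) j
      rw [Matrix.mul_apply] at h0
      simp only [hadj] at h0
      rw [Matrix.smul_apply, hdet, smul_eq_mul] at h0
      apply mul_left_cancel₀ hS0
      rw [Matrix.mul_apply]
      calc S * ∑ k, N i k * (A.map MvPolynomial.C) k j
          = ∑ k, N i k * (MvPolynomial.C (A k j) * S) := by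
            rw [Finset.mul_sum]
            apply Finset.sum_congr rfl
            intro k _
            rw [Matrix.map_apply]; ring
        _ = L * S * (1 : Matrix _ _ (MvPolynomial (Fin q) ℂ)) i j := h0
        _ = S * (L • (1 : Matrix _ _ (MvPolynomial (Fin q) ℂ))) i j := by
            rw [Matrix.smul_apply, smul_eq_mul]; ring
    have hLhom : L.IsHomogeneous 1 := by
      rw [hL]
      apply MvPolynomial.IsHomogeneous.sum
      intro k _
      have := (hlin (rows 0) (cols k)).mul (MvPolynomial.isHomogeneous_C (Fin q) (A k 0))
      simpa [hN] using this
    have hmapdet : (A.map MvPolynomial.C).det = (MvPolynomial.C A.det : MvPolynomial (Fin q) ℂ) := by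
      rw [← RingHom.mapMatrix_apply, ← RingHom.map_det]
    have hpow : L * S * MvPolynomial.C A.det = L ^ (r + 2) := by
      have h1 : (N * A.map MvPolynomial.C).det
          = N.det * (A.map MvPolynomial.C).det := Matrix.det_mul _ _
      rw [hid, Matrix.det_smul, Matrix.det_one, mul_one, Fintype.card_fin] at h1
      rw [h1, hdet, hmapdet]
    have hL0 : L = 0 := by
      by_contra hL0
      have hcancel : S * MvPolynomial.C A.det = L ^ (r + 1) := by
        apply mul_left_cancel₀ hL0
        rw [← mul_assoc, hpow, ← pow_succ']
      have hAd : A.det ≠ 0 := by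
        intro h0
        rw [h0, map_zero, mul_zero] at hcancel
        exact hL0 (pow_eq_zero_iff (by omega : r + 1 ≠ 0) |>.mp hcancel.symm)
      have hdvd : L ∣ S := by
        refine ⟨L ^ r * MvPolynomial.C A.det⁻¹, ?_⟩
        have hS : S = S * (MvPolynomial.C A.det * MvPolynomial.C A.det⁻¹) := by
          rw [← map_mul, mul_inv_cancel₀ hAd, map_one, mul_one]
        rw [hS, ← mul_assoc, hcancel, pow_succ']
        ring
      exact hSnolin L (hLhom.totalDegree hL0) hdvd
    rw [hdet, hL0, zero_mul]
  refine ⟨?_, key⟩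
  intro x
  apply aux_rank_le
  intro rows cols hrinj hcinj
  have heq : (Matrix.of fun i j => MvPolynomial.eval x (M i j)).submatrix rows cols
      = (MvPolynomial.eval x).mapMatrix (M.submatrix rows cols) := rfl
  rw [heq, ← RingHom.map_det, key rows cols hrinj hcinj, map_zero]
end
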